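/- arXiv:2601.08062 — 8 statements merged into one kernel-verified Lean document; each statement's English description precedes it below -/
import Mathlib

section
/- Let (β_g)_{g≥1} be the sequence of rational numbers defined by β_1 = 1/2 and, for g ≥ 2, β_g = (1/2)·Σ_{ℓ=1}^{g−1} β_ℓ·β_{g−ℓ} + (1/2)·Σ over all tuples (k_1,…,k_{g−1}) of nonnegative integers with k_1 + 2k_2 + … + (g−1)k_{g−1} = g−1 of ((k_1+k_2+…+k_{g−1})!/(k_1!·k_2!⋯k_{g−1}!))·((k_1+…+k_{g−1}) + 1)·Π_{ℓ=1}^{g−1} β_ℓ^{k_ℓ}. Then for every g ≥ 1, 2^{2g−1}·β_g = C_{2g−1}, where C_m denotes the m-th Catalan number. -/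
open Finset

/-- The set of tuples `(k_1, …, k_{g-1}) ∈ ℕ^{g-1}` with `k_1 + 2k_2 + … + (g-1)k_{g-1} = g-1`,
represented as functions `Fin (g-1) → ℕ` (index `i` corresponds to `k_{i+1}`).  Every such tuple
has `k_ℓ ≤ g-1 < g`, so filtering inside `Finset.range g` captures all solutions. -/
def weightedTuples (g : ℕ) : Finset (Fin (g - 1) → ℕ) :=
  (Fintype.piFinset fun _ => Finset.range g).filter fun k =>
    ∑ i, (i.1 + 1) * k i = g - 1

/-! ### Auxiliary lemmas -/

lemma sum_range_even_odd {M : Type*} [AddCommMonoid M] (F : ℕ → M) (m : ℕ) :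
    ∑ i ∈ range (2 * m), F i = (∑ j ∈ range m, F (2 * j)) + ∑ j ∈ range m, F (2 * j + 1) := by
  induction m with
  | zero => simp
  | succ m ih =>
    have : 2 * (m + 1) = (2 * m) + 1 + 1 := by ring
    rw [this, sum_range_succ, sum_range_succ, ih, sum_range_succ, sum_range_succ]
    abel

lemma catalan_succ_range (n : ℕ) :
    catalan (n + 1) = ∑ i ∈ range (n + 1), catalan i * catalan (n - i) := by
  rw [catalan_succ', Nat.sum_antidiagonal_eq_sum_range_succ_mk]

lemma cat_even (j : ℕ) (hj : 1 ≤ j) :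
    catalan (2 * j) = ∑ ℓ ∈ Finset.Ico 1 (j + 1), 2 * (catalan (2 * ℓ - 1) * catalan (2 * (j - ℓ))) := by
  obtain ⟨j, rfl⟩ : ∃ j', j = j' + 1 := ⟨j - 1, (Nat.succ_pred_eq_of_pos hj).symm⟩
  have h1 : 2 * (j + 1) = (2 * j + 1) + 1 := by ring
  rw [h1, catalan_succ_range]
  have h2 : (2 * j + 1 + 1) = 2 * (j + 1) := by ring
  rw [h2, sum_range_even_odd (fun i => catalan i * catalan (2 * j + 1 - i)) (j + 1)]
  have heven : (∑ t ∈ range (j + 1), catalan (2 * t) * catalan (2 * j + 1 - 2 * t))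
      = ∑ t ∈ range (j + 1), catalan (2 * t + 1) * catalan (2 * j + 1 - (2 * t + 1)) := by
    rw [← Finset.sum_range_reflect]
    apply Finset.sum_congr rfl
    intro t ht
    simp only [mem_range] at ht
    have e1 : j + 1 - 1 - t = j - t := by omega
    have e2 : 2 * j + 1 - 2 * (j - t) = 2 * t + 1 := by omega
    have e3 : 2 * j + 1 - (2 * t + 1) = 2 * (j - t) := by omega
    rw [e1, e2, e3, mul_comm]
  rw [heven, ← two_mul]
  symm
  rw [Finset.sum_Ico_eq_sum_range, Finset.mul_sum]
  apply Finset.sum_congr (by congr 1)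
  intro t ht
  simp only [mem_range] at ht
  have e1 : 2 * (1 + t) - 1 = 2 * t + 1 := by omega
  have e2 : j + 1 - (1 + t) = j - t := by omega
  have e3 : 2 * j + 1 - (2 * t + 1) = 2 * (j - t) := by omega
  rw [e1, e2, e3]

lemma cat_odd (g : ℕ) (hg : 1 ≤ g) :
    catalan (2 * g - 1) = (∑ ℓ ∈ Finset.Ico 1 g, catalan (2 * ℓ - 1) * catalan (2 * (g - ℓ) - 1))
      + ∑ j ∈ range g, catalan (2 * j) * catalan (2 * (g - 1 - j)) := by
  obtain ⟨m, rfl⟩ : ∃ m, g = m + 1 := ⟨g - 1, (Nat.succ_pred_eq_of_pos hg).symm⟩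
  have h1 : 2 * (m + 1) - 1 = (2 * m) + 1 := by omega
  rw [h1, catalan_succ_range, sum_range_succ, sum_range_even_odd (fun i => catalan i * catalan (2 * m - i)) m]
  have hodd : (∑ t ∈ range m, catalan (2 * t + 1) * catalan (2 * m - (2 * t + 1)))
      = ∑ ℓ ∈ Finset.Ico 1 (m + 1), catalan (2 * ℓ - 1) * catalan (2 * (m + 1 - ℓ) - 1) := by
    rw [Finset.sum_Ico_eq_sum_range]
    apply Finset.sum_congr (by congr 1)
    intro t ht
    simp only [mem_range] at ht
    have e1 : 2 * (1 + t) - 1 = 2 * t + 1 := by omega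
    have e2 : 2 * (m + 1 - (1 + t)) - 1 = 2 * m - (2 * t + 1) := by omega
    rw [e1, e2]
  have heven : (∑ t ∈ range m, catalan (2 * t) * catalan (2 * m - 2 * t)) + catalan (2 * m) * catalan (2 * m - 2 * m)
      = ∑ j ∈ range (m + 1), catalan (2 * j) * catalan (2 * (m + 1 - 1 - j)) := by
    rw [sum_range_succ]
    congr 1
    · apply Finset.sum_congr rfl
      intro t ht
      simp only [mem_range] at ht
      have e : 2 * m - 2 * t = 2 * (m + 1 - 1 - t) := by omega
      rw [e]
    · have e : 2 * m - 2 * m = 2 * (m + 1 - 1 - m) := by omega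
      rw [e]
  rw [hodd, ← heven]
  ring

/-! ### Polynomial generating function -/

noncomputable def fpoly (g : ℕ) : Polynomial ℚ :=
  ∑ i : Fin (g - 1), Polynomial.C (2 * (catalan (2 * (i.1 + 1) - 1) : ℚ)) * Polynomial.X ^ (i.1 + 1)

noncomputable def Ppoly (g : ℕ) : Polynomial ℚ := ∑ n ∈ range g, (fpoly g) ^ n

lemma fpoly_coeff_zero (g : ℕ) : (fpoly g).coeff 0 = 0 := by
  simp [fpoly, Polynomial.finset_sum_coeff, Polynomial.coeff_C_mul, Polynomial.coeff_X_pow]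

lemma fpoly_coeff (g ℓ : ℕ) (h1 : 1 ≤ ℓ) (h2 : ℓ ≤ g - 1) :
    (fpoly g).coeff ℓ = 2 * (catalan (2 * ℓ - 1) : ℚ) := by
  rw [fpoly, Polynomial.finset_sum_coeff]
  rw [Finset.sum_eq_single (⟨ℓ - 1, by omega⟩ : Fin (g - 1))]
  · simp only [Polynomial.coeff_C_mul, Polynomial.coeff_X_pow]
    have : ℓ - 1 + 1 = ℓ := by omega
    rw [this]
    simp
  · intro b _ hb
    simp only [Polynomial.coeff_C_mul, Polynomial.coeff_X_pow]
    rw [if_neg, mul_zero]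
    intro h
    apply hb
    apply Fin.ext
    simp only
    omega
  · intro h
    exact absurd (Finset.mem_univ _) h

lemma pow_coeff_eq_zero {p : Polynomial ℚ} (h : p.coeff 0 = 0) {m j : ℕ} (hj : j < m) :
    (p ^ m).coeff j = 0 := by
  obtain ⟨q, hq⟩ : (Polynomial.X : Polynomial ℚ) ^ m ∣ p ^ m :=
    pow_dvd_pow_of_dvd (Polynomial.X_dvd_iff.mpr h) m
  rw [hq, mul_comm, Polynomial.coeff_mul_X_pow', if_neg (by omega)]

lemma Ppoly_eq (g : ℕ) : Ppoly g = 1 + fpoly g * Ppoly g - (fpoly g) ^ g := by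
  have h := geom_sum_mul (fpoly g) g
  unfold Ppoly
  linear_combination -h

lemma Ppoly_coeff_catalan (g : ℕ) (hg : 1 ≤ g) :
    ∀ j, j ≤ g - 1 → (Ppoly g).coeff j = (catalan (2 * j) : ℚ) := by
  intro j
  induction j using Nat.strong_induction_on with
  | _ j ih =>
    intro hj
    rcases Nat.eq_zero_or_pos j with rfl | hj1
    · rw [Ppoly_eq]
      simp only [Polynomial.coeff_sub, Polynomial.coeff_add, Polynomial.coeff_one,
        Polynomial.mul_coeff_zero, fpoly_coeff_zero, zero_mul,
        pow_coeff_eq_zero (fpoly_coeff_zero g) (by omega : 0 < g)]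
      norm_num
    · conv_lhs => rw [Ppoly_eq]
      rw [Polynomial.coeff_sub, Polynomial.coeff_add, Polynomial.coeff_one,
        pow_coeff_eq_zero (fpoly_coeff_zero g) (by omega : j < g),
        Polynomial.coeff_mul, Nat.sum_antidiagonal_eq_sum_range_succ_mk,
        Finset.sum_range_succ']
      simp only [fpoly_coeff_zero, zero_mul, add_zero, Nat.sub_zero]
      rw [if_neg (by omega), zero_add, sub_zero]
      have hstep : ∀ i ∈ range j, (fpoly g).coeff (i + 1) * (Ppoly g).coeff (j - (i + 1))
          = 2 * ((catalan (2 * (i + 1) - 1) : ℚ) * (catalan (2 * (j - (i + 1))) : ℚ)) := by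
        intro i hi
        simp only [mem_range] at hi
        rw [fpoly_coeff g (i + 1) (by omega) (by omega), ih (j - (i + 1)) (by omega) (by omega)]
        ring
      rw [Finset.sum_congr rfl hstep]
      have hcast : ((catalan (2 * j) : ℕ) : ℚ)
          = ∑ ℓ ∈ Finset.Ico 1 (j + 1), 2 * ((catalan (2 * ℓ - 1) : ℚ) * (catalan (2 * (j - ℓ)) : ℚ)) := by
        rw [cat_even j hj1]
        push_cast
        rfl
      rw [hcast, Finset.sum_Ico_eq_sum_range]
      apply Finset.sum_congr (by congr 1)
      intro i hi
      rw [add_comm 1 i]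

lemma coeff_fpow (g n : ℕ) :
    ((fpoly g) ^ n).coeff (g - 1) =
      ∑ k ∈ (weightedTuples g).filter (fun k => ∑ i, k i = n),
        (Nat.multinomial Finset.univ k : ℚ)
          * ∏ i : Fin (g - 1), (2 * (catalan (2 * (i.1 + 1) - 1) : ℚ)) ^ k i := by
  rw [fpoly, Finset.sum_pow_eq_sum_piAntidiag, Polynomial.finset_sum_coeff]
  have hterm : ∀ k : Fin (g - 1) → ℕ,
      ((((Nat.multinomial Finset.univ k : ℕ) : Polynomial ℚ))
        * ∏ i : Fin (g - 1), (Polynomial.C (2 * (catalan (2 * (i.1 + 1) - 1) : ℚ)) * Polynomial.X ^ (i.1 + 1)) ^ k i).coeff (g - 1)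
      = if g - 1 = ∑ i, (i.1 + 1) * k i then
          (Nat.multinomial Finset.univ k : ℚ)
            * ∏ i : Fin (g - 1), (2 * (catalan (2 * (i.1 + 1) - 1) : ℚ)) ^ k i
        else 0 := by
    intro k
    have hprod : (∏ i : Fin (g - 1), (Polynomial.C (2 * (catalan (2 * (i.1 + 1) - 1) : ℚ)) * Polynomial.X ^ (i.1 + 1)) ^ k i)
        = Polynomial.C (∏ i : Fin (g - 1), (2 * (catalan (2 * (i.1 + 1) - 1) : ℚ)) ^ k i)
            * Polynomial.X ^ (∑ i, (i.1 + 1) * k i) := by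
      simp_rw [mul_pow, ← Polynomial.C_pow, ← pow_mul]
      rw [Finset.prod_mul_distrib, map_prod, Finset.prod_pow_eq_pow_sum]
      simp [mul_pow]
    rw [hprod, ← mul_assoc, ← Polynomial.C_eq_natCast, ← map_mul, Polynomial.coeff_C_mul,
      Polynomial.coeff_X_pow, mul_ite, mul_one, mul_zero]
  rw [Finset.sum_congr rfl (fun k _ => hterm k), ← Finset.sum_filter]
  apply Finset.sum_congr _ (fun k _ => rfl)
  ext k
  simp only [Finset.mem_filter, Finset.mem_piAntidiag, Finset.mem_univ, weightedTuples,
    Fintype.mem_piFinset, Finset.mem_range, ne_eq]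
  constructor
  · rintro ⟨⟨hsum, -⟩, hw⟩
    refine ⟨⟨fun i => ?_, hw.symm⟩, hsum⟩
    have h1 : (i.1 + 1) * k i ≤ ∑ j, (j.1 + 1) * k j :=
      Finset.single_le_sum (f := fun j => (j.1 + 1) * k j) (fun _ _ => Nat.zero_le _)
        (Finset.mem_univ i)
    have h2 : k i ≤ (i.1 + 1) * k i := Nat.le_mul_of_pos_left _ (by omega)
    have h3 := i.2
    omega
  · rintro ⟨⟨-, hw⟩, hsum⟩
    exact ⟨⟨hsum, fun i _ => trivial⟩, hw.symm⟩

lemma count_lemma {h : ℕ → ℚ} (g : ℕ) (h0 : ∀ s, g ≤ s → h s = 0) :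
    ∑ n ∈ range g, ∑ m ∈ range g, h (n + m) = ∑ s ∈ range g, ((s : ℚ) + 1) * h s := by
  have step1 : ∀ n ∈ range g, ∑ m ∈ range g, h (n + m)
      = ∑ s ∈ range g, if n ≤ s then h s else 0 := by
    intro n hn
    rw [← Finset.sum_filter]
    have hf : (range g).filter (fun s => n ≤ s) = Finset.Ico n g := by
      ext s; simp [Finset.mem_Ico, and_comm]
    rw [hf, Finset.sum_Ico_eq_sum_range]
    refine (Finset.sum_subset ?_ ?_).symm
    · intro m hm
      simp only [mem_range] at *
      exact lt_of_lt_of_le hm (Nat.sub_le g n)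
    · intro m hm hm'
      simp only [mem_range] at *
      exact h0 _ (by omega)
  rw [Finset.sum_congr rfl step1, Finset.sum_comm]
  apply Finset.sum_congr rfl
  intro s hs
  simp only [mem_range] at hs
  rw [← Finset.sum_filter]
  have hf : (range g).filter (fun n => n ≤ s) = range (s + 1) := by
    ext n; simp only [mem_filter, mem_range]; omega
  rw [hf, Finset.sum_const, Finset.card_range, nsmul_eq_mul]
  push_cast
  ring

lemma tuple_sum_eq (g : ℕ) (hg : 1 ≤ g) :
    (∑ k ∈ weightedTuples g, (Nat.multinomial Finset.univ k : ℚ) * (((∑ i, k i : ℕ) : ℚ) + 1)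
        * ∏ i : Fin (g - 1), (2 * (catalan (2 * (i.1 + 1) - 1) : ℚ)) ^ k i)
      = ∑ j ∈ range g, (catalan (2 * j) : ℚ) * (catalan (2 * (g - 1 - j)) : ℚ) := by
  have hmaps : ∀ k ∈ weightedTuples g, (∑ i, k i) ∈ range g := by
    intro k hk
    simp only [weightedTuples, Finset.mem_filter] at hk
    obtain ⟨-, hw⟩ := hk
    simp only [mem_range]
    have h1 : (∑ i, k i) ≤ ∑ i, (i.1 + 1) * k i :=
      Finset.sum_le_sum (fun i _ => Nat.le_mul_of_pos_left _ (by omega))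
    omega
  rw [← Finset.sum_fiberwise_of_maps_to hmaps]
  have hinner : ∀ n ∈ range g,
      (∑ k ∈ (weightedTuples g).filter (fun k => ∑ i, k i = n),
        (Nat.multinomial Finset.univ k : ℚ) * (((∑ i, k i : ℕ) : ℚ) + 1)
          * ∏ i : Fin (g - 1), (2 * (catalan (2 * (i.1 + 1) - 1) : ℚ)) ^ k i)
      = ((n : ℚ) + 1) * ((fpoly g) ^ n).coeff (g - 1) := by
    intro n hn
    rw [coeff_fpow g n, Finset.mul_sum]
    apply Finset.sum_congr rfl
    intro k hk
    simp only [Finset.mem_filter] at hk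
    rw [hk.2]
    ring
  rw [Finset.sum_congr rfl hinner]
  have hvanish : ∀ s, g ≤ s → ((fpoly g) ^ s).coeff (g - 1) = 0 := by
    intro s hs
    exact pow_coeff_eq_zero (fpoly_coeff_zero g) (by omega)
  rw [← count_lemma g hvanish]
  have hPsq : ∀ n ∈ range g, ∀ m ∈ range g, ((fpoly g) ^ (n + m)).coeff (g - 1)
      = (((fpoly g) ^ n) * ((fpoly g) ^ m)).coeff (g - 1) := by
    intro n _ m _
    rw [← pow_add]
  calc ∑ n ∈ range g, ∑ m ∈ range g, ((fpoly g) ^ (n + m)).coeff (g - 1)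
      = ((Ppoly g) * (Ppoly g)).coeff (g - 1) := by
        unfold Ppoly
        rw [Finset.sum_mul]
        rw [Polynomial.finset_sum_coeff]
        apply Finset.sum_congr rfl
        intro n hn
        rw [Finset.mul_sum, Polynomial.finset_sum_coeff]
        apply Finset.sum_congr rfl
        intro m hm
        rw [← pow_add]
    _ = ∑ j ∈ range g, (catalan (2 * j) : ℚ) * (catalan (2 * (g - 1 - j)) : ℚ) := by
        rw [Polynomial.coeff_mul, Nat.sum_antidiagonal_eq_sum_range_succ_mk]
        have hr : (g - 1).succ = g := by omega
        rw [hr]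
        apply Finset.sum_congr rfl
        intro j hj
        simp only [mem_range] at hj
        rw [Ppoly_coeff_catalan g hg j (by omega), Ppoly_coeff_catalan g hg (g - 1 - j) (by omega)]

/-! ### The scaled sequence -/

noncomputable def ccat (x : ℕ) : ℚ := (catalan (2 * x - 1) : ℚ) / 2 ^ (2 * x - 1)

lemma ccat_term (g ℓ : ℕ) (h1 : 1 ≤ ℓ) (h2 : ℓ < g) :
    ccat ℓ * ccat (g - ℓ) * 2 ^ (2 * (g - 1))
      = (catalan (2 * ℓ - 1) : ℚ) * (catalan (2 * (g - ℓ) - 1) : ℚ) := by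
  unfold ccat
  have hxy : 2 * ℓ - 1 + (2 * (g - ℓ) - 1) = 2 * (g - 1) := by omega
  rw [← hxy, pow_add]
  have ha : ((2 : ℚ) ^ (2 * ℓ - 1)) ≠ 0 := by positivity
  have hb : ((2 : ℚ) ^ (2 * (g - ℓ) - 1)) ≠ 0 := by positivity
  field_simp

lemma ccat_prod (g : ℕ) (k : Fin (g - 1) → ℕ) (hw : ∑ i, (i.1 + 1) * k i = g - 1) :
    (∏ i : Fin (g - 1), ccat (i.1 + 1) ^ k i) * 2 ^ (2 * (g - 1))
      = ∏ i : Fin (g - 1), (2 * (catalan (2 * (i.1 + 1) - 1) : ℚ)) ^ k i := by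
  have hsplit : (∏ i : Fin (g - 1), ccat (i.1 + 1) ^ k i)
      = (∏ i : Fin (g - 1), ((catalan (2 * (i.1 + 1) - 1) : ℚ)) ^ k i)
          / 2 ^ (∑ i, (2 * (i.1 + 1) - 1) * k i) := by
    simp_rw [ccat, div_pow]
    rw [Finset.prod_div_distrib]
    congr 1
    simp_rw [← pow_mul]
    rw [Finset.prod_pow_eq_pow_sum]
  have hrhs : (∏ i : Fin (g - 1), (2 * (catalan (2 * (i.1 + 1) - 1) : ℚ)) ^ k i)
      = 2 ^ (∑ i, k i) * ∏ i : Fin (g - 1), ((catalan (2 * (i.1 + 1) - 1) : ℚ)) ^ k i := by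
    simp_rw [mul_pow]
    rw [Finset.prod_mul_distrib, Finset.prod_pow_eq_pow_sum]
  have harith : (∑ i, (2 * (i.1 + 1) - 1) * k i) + (∑ i, k i) = 2 * (g - 1) := by
    rw [← Finset.sum_add_distrib]
    have hpt : ∀ i ∈ (Finset.univ : Finset (Fin (g - 1))),
        (2 * (i.1 + 1) - 1) * k i + k i = 2 * ((i.1 + 1) * k i) := by
      intro i _
      have h : 2 * (i.1 + 1) - 1 = 2 * i.1 + 1 := by omega
      rw [h]
      ring
    rw [Finset.sum_congr rfl hpt, ← Finset.mul_sum, hw]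
  rw [hsplit, hrhs, ← harith, pow_add]
  have ha : ((2 : ℚ) ^ (∑ i, (2 * (i.1 + 1) - 1) * k i)) ≠ 0 := by positivity
  field_simp

lemma key_identity (g : ℕ) (hg : 2 ≤ g) :
    (1 / 2) * (∑ ℓ ∈ Finset.Ico 1 g, ccat ℓ * ccat (g - ℓ))
      + (1 / 2) * ∑ k ∈ weightedTuples g,
          (Nat.multinomial Finset.univ k : ℚ) * (((∑ i, k i : ℕ) : ℚ) + 1)
            * ∏ ℓ : Fin (g - 1), ccat (ℓ.1 + 1) ^ k ℓ
    = ccat g := by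
  have hD : ((2 : ℚ) ^ (2 * (g - 1))) ≠ 0 := by positivity
  have hS1 : (∑ ℓ ∈ Finset.Ico 1 g, ccat ℓ * ccat (g - ℓ)) * 2 ^ (2 * (g - 1))
      = ∑ ℓ ∈ Finset.Ico 1 g, (catalan (2 * ℓ - 1) : ℚ) * (catalan (2 * (g - ℓ) - 1) : ℚ) := by
    rw [Finset.sum_mul]
    apply Finset.sum_congr rfl
    intro ℓ hℓ
    simp only [Finset.mem_Ico] at hℓ
    exact ccat_term g ℓ hℓ.1 hℓ.2
  have hS2 : (∑ k ∈ weightedTuples g,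
          (Nat.multinomial Finset.univ k : ℚ) * (((∑ i, k i : ℕ) : ℚ) + 1)
            * ∏ ℓ : Fin (g - 1), ccat (ℓ.1 + 1) ^ k ℓ) * 2 ^ (2 * (g - 1))
      = ∑ j ∈ range g, (catalan (2 * j) : ℚ) * (catalan (2 * (g - 1 - j)) : ℚ) := by
    rw [Finset.sum_mul, ← tuple_sum_eq g (by omega)]
    apply Finset.sum_congr rfl
    intro k hk
    simp only [weightedTuples, Finset.mem_filter] at hk
    have hp := ccat_prod g k hk.2
    linear_combination ((Nat.multinomial Finset.univ k : ℚ) * (((∑ i, k i : ℕ) : ℚ) + 1)) * hp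
  have hclose : (∑ ℓ ∈ Finset.Ico 1 g, (catalan (2 * ℓ - 1) : ℚ) * (catalan (2 * (g - ℓ) - 1) : ℚ))
      + (∑ j ∈ range g, (catalan (2 * j) : ℚ) * (catalan (2 * (g - 1 - j)) : ℚ))
      = (catalan (2 * g - 1) : ℚ) := by
    rw [cat_odd g (by omega)]
    push_cast
    ring
  have hfin : ccat g * (2 * 2 ^ (2 * (g - 1))) = (catalan (2 * g - 1) : ℚ) := by
    unfold ccat
    have hpow : (2 : ℚ) ^ (2 * g - 1) = 2 ^ (2 * (g - 1)) * 2 := by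
      rw [← pow_succ]
      congr 1
      omega
    rw [hpow, mul_comm (2 : ℚ) (2 ^ (2 * (g - 1))), div_mul_cancel₀]
    positivity
  apply mul_right_cancel₀ (b := 2 * 2 ^ (2 * (g - 1))) (by positivity)
  rw [hfin]
  rw [← hclose, ← hS1, ← hS2]
  ring

/-- If `β 1 = 1/2` and, for `g ≥ 2`,
`β g = (1/2)·Σ_{ℓ=1}^{g−1} β_ℓ β_{g−ℓ}
      + (1/2)·Σ_{k_1+2k_2+…+(g−1)k_{g−1}=g−1} multinomial(k)·(Σ k_ℓ + 1)·Π β_ℓ^{k_ℓ}`,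
then `2^{2g−1}·β_g = C_{2g−1}` for all `g ≥ 1`. -/
theorem stmt0 (β : ℕ → ℚ)
    (hβ1 : β 1 = 1 / 2)
    (hrec : ∀ g, 2 ≤ g →
      β g = (1 / 2) * (∑ ℓ ∈ Finset.Ico 1 g, β ℓ * β (g - ℓ))
        + (1 / 2) * ∑ k ∈ weightedTuples g,
            (Nat.multinomial Finset.univ k : ℚ) * (((∑ i, k i : ℕ) : ℚ) + 1)
              * ∏ ℓ : Fin (g - 1), β (ℓ.1 + 1) ^ k ℓ) :
    ∀ g, 1 ≤ g → 2 ^ (2 * g - 1) * β g = catalan (2 * g - 1) := by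
  have hmain : ∀ g, 1 ≤ g → β g = ccat g := by
    intro g
    induction g using Nat.strong_induction_on with
    | _ g ih =>
      intro hg
      rcases eq_or_lt_of_le hg with h1 | h2
      · rw [← h1, hβ1]
        unfold ccat
        norm_num
      · have hg2 : 2 ≤ g := h2
        rw [hrec g hg2]
        have e1 : (∑ ℓ ∈ Finset.Ico 1 g, β ℓ * β (g - ℓ))
            = ∑ ℓ ∈ Finset.Ico 1 g, ccat ℓ * ccat (g - ℓ) := by
          apply Finset.sum_congr rfl
          intro ℓ hℓ
          simp only [Finset.mem_Ico] at hℓ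
          rw [ih ℓ (by omega) (by omega), ih (g - ℓ) (by omega) (by omega)]
        have e2 : (∑ k ∈ weightedTuples g,
              (Nat.multinomial Finset.univ k : ℚ) * (((∑ i, k i : ℕ) : ℚ) + 1)
                * ∏ ℓ : Fin (g - 1), β (ℓ.1 + 1) ^ k ℓ)
            = ∑ k ∈ weightedTuples g,
              (Nat.multinomial Finset.univ k : ℚ) * (((∑ i, k i : ℕ) : ℚ) + 1)
                * ∏ ℓ : Fin (g - 1), ccat (ℓ.1 + 1) ^ k ℓ := by
          apply Finset.sum_congr rfl
          intro k _
          congr 1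
          apply Finset.prod_congr rfl
          intro i _
          have hi := i.2
          rw [ih (i.1 + 1) (by omega) (by omega)]
        rw [e1, e2, key_identity g hg2]
  intro g hg
  rw [hmain g hg]
  unfold ccat
  rw [mul_comm, div_mul_cancel₀]
  positivity
end

section
/- Let D ∈ ℚ[[X]] be the formal power series whose coefficient of X^n is the Catalan number C_n when n is odd and 0 when n is even (the odd part of the Catalan generating function). Then D satisfies the functional equation D·(1 − 2XD)^2 = (X + X·D^2)·(1 − 2XD)^2 + 2X^2·D·(1 − 2XD) + 2X^2·D, i.e., the identity obtained by clearing denominators in D = X + X·D^2 + 2X^2·D/(1−2XD)^2 + 2X^2·D/(1−2XD). -/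
open PowerSeries

/-- The odd part of the Catalan generating function: the formal power series over `ℚ` whose
`n`-th coefficient is the Catalan number `C_n` if `n` is odd and `0` if `n` is even. -/
noncomputable def catalanOdd : PowerSeries ℚ :=
  PowerSeries.mk fun n => if Odd n then (catalan n : ℚ) else 0

/-- The full Catalan generating function. -/
noncomputable def catalanGF : PowerSeries ℚ :=
  PowerSeries.mk fun n => (catalan n : ℚ)

/-- The Catalan generating function at `-X`. -/
noncomputable def catalanGFneg : PowerSeries ℚ :=
  PowerSeries.mk fun n => (-1) ^ n * (catalan n : ℚ)

lemma coeff_X_mul_sq (f : PowerSeries ℚ) (n : ℕ) :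
    (coeff (n + 1)) (X * f ^ 2)
      = ∑ ij ∈ Finset.HasAntidiagonal.antidiagonal n, coeff ij.1 f * coeff ij.2 f := by
  rw [sq, PowerSeries.coeff_succ_X_mul, PowerSeries.coeff_mul]

lemma catalanGF_eq : catalanGF = 1 + X * catalanGF ^ 2 := by
  ext n
  cases n with
  | zero => simp [catalanGF]
  | succ n =>
    rw [map_add, coeff_X_mul_sq]
    simp only [catalanGF, coeff_mk, PowerSeries.coeff_one, Nat.succ_ne_zero, if_false, zero_add,
      catalan_succ' n]
    push_cast
    rfl

lemma catalanGFneg_eq : catalanGFneg = 1 - X * catalanGFneg ^ 2 := by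
  ext n
  cases n with
  | zero => simp [catalanGFneg]
  | succ n =>
    rw [map_sub, coeff_X_mul_sq]
    simp only [catalanGFneg, coeff_mk, PowerSeries.coeff_one, Nat.succ_ne_zero, if_false, zero_sub,
      catalan_succ' n]
    push_cast
    rw [Finset.mul_sum, ← Finset.sum_neg_distrib]
    refine Finset.sum_congr rfl fun ij hij => ?_
    rw [Finset.HasAntidiagonal.mem_antidiagonal] at hij
    rw [← hij, pow_succ, pow_add]
    ring

lemma sub_eq_two_odd : catalanGF - catalanGFneg = 2 * catalanOdd := by
  have h2 : (2 : PowerSeries ℚ) * catalanOdd = C 2 * catalanOdd := by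
    rw [show (2 : ℚ) = 1 + 1 by norm_num, map_add, map_one]
    norm_num
  ext n
  rw [map_sub, h2, coeff_C_mul]
  simp only [catalanGF, catalanGFneg, catalanOdd, coeff_mk]
  rcases Nat.even_or_odd n with h | h
  · rw [h.neg_one_pow]
    simp [Nat.not_odd_iff_even.mpr h]
  · rw [h.neg_one_pow]
    simp [h]
    ring

/-- `D` satisfies `D·(1−2XD)² = (X + X·D²)·(1−2XD)² + 2X²·D·(1−2XD) + 2X²·D`, the identity
obtained by clearing denominators in `D = X + X·D² + 2X²·D/(1−2XD)² + 2X²·D/(1−2XD)`. -/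
theorem stmt1 :
    catalanOdd * (1 - 2 * X * catalanOdd) ^ 2
      = (X + X * catalanOdd ^ 2) * (1 - 2 * X * catalanOdd) ^ 2
        + 2 * X ^ 2 * catalanOdd * (1 - 2 * X * catalanOdd)
        + 2 * X ^ 2 * catalanOdd := by
  set D := catalanOdd
  set F := catalanGF
  set G := catalanGFneg
  have hF := catalanGF_eq
  have hG := catalanGFneg_eq
  have h3 : F - G = 2 * D := sub_eq_two_odd
  have hD2 : 2 * D = X * (F ^ 2 + G ^ 2) := by linear_combination hF - hG - h3
  have hE2 : (F + G) * (1 - 2 * X * D) = 2 := by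
    linear_combination hF + hG + X * (F + G) * h3
  have key4 : 4 * (D * (1 - 2 * X * D) ^ 2)
      = 4 * (X * D ^ 2 * (1 - 2 * X * D) ^ 2 + X) := by
    linear_combination (2 * (1 - 2 * X * D) ^ 2) * hD2
      + (X * ((F + G) * (1 - 2 * X * D) + 2)) * hE2
      + (X * (1 - 2 * X * D) ^ 2 * (F - G + 2 * D)) * h3
  have key : D * (1 - 2 * X * D) ^ 2 = X * D ^ 2 * (1 - 2 * X * D) ^ 2 + X :=
    mul_left_cancel₀ (by
      intro h
      have := congrArg (constantCoeff (R := ℚ)) h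
      rw [map_ofNat, map_zero] at this
      norm_num at this) key4
  linear_combination key
end

section
/- Let Ẽ : ℕ × ℕ → ℚ be defined by Ẽ(1,0) = 1, Ẽ(1,g) = 0 for g ≥ 1, Ẽ(0,g) = 0 for all g, and for n ≥ 2 and all g ≥ 0: Ẽ(n,g) = (1/2)·[ Σ over compositions (c_1,c_2) of n into 2 parts and compositions (d_1,d_2) of g+2 into 2 parts of Ẽ(c_1,d_1−1)·Ẽ(c_2,d_2−1) + (if n and g are both even then Ẽ(n/2,g/2) else 0) + Σ_{k=3}^{n} (k−2)·Σ over compositions (c_1,…,c_k) of n into k parts and compositions (d_1,…,d_k) of g−1+k into k parts of Π_{i=1}^{k} Ẽ(c_i,d_i−1) + Σ_{a=1}^{⌊(n−1)/2⌋} Σ over palindromic compositions (c_1,…,c_{2a+1}) of n into 2a+1 parts and palindromic compositions (d_1,…,d_{2a+1}) of g+2a into 2a+1 parts of Π_{i=1}^{a+1} Ẽ(c_i,d_i−1) ] + Σ_{k=2}^{n} Σ over compositions (c_1,…,c_k) of n into k parts and compositions (d_1,…,d_k) of g−1+k into k parts of Π_{i=1}^{k} Ẽ(c_i,d_i−1).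 (This recursion counts unlabeled general galled trees with n leaves and g galls.) Then for every n ≥ 1, Ẽ(n, n−1) = C_{n−1}, the (n−1)-st Catalan number. -/
open Finset

/-- The compositions of `a` into `b` (positive) parts, as functions `Fin b → ℕ`.
Every part of a composition of `a` lies in `[1, a]`, so filtering inside
`Finset.Icc 1 a` captures all compositions. -/
def compositions (a b : ℕ) : Finset (Fin b → ℕ) :=
  (Fintype.piFinset fun _ => Finset.Icc 1 a).filter fun c => ∑ i, c i = a

/-- The palindromic compositions of `a` into `b` parts: compositions with `c i = c (b+1−i)`. -/
def palCompositions (a b : ℕ) : Finset (Fin b → ℕ) :=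
  (compositions a b).filter fun c => ∀ i, c i = c i.rev

lemma mem_compositions' {a b : ℕ} {c : Fin b → ℕ} (hc : c ∈ compositions a b) :
    (∀ i, 1 ≤ c i) ∧ ∑ i, c i = a := by
  simp only [compositions, mem_filter, Fintype.mem_piFinset, Finset.mem_Icc] at hc
  exact ⟨fun i => (hc.1 i).1, hc.2⟩

lemma comp_part_lt {a k : ℕ} (hk : 2 ≤ k) {c : Fin k → ℕ} (hc : c ∈ compositions a k)
    (i : Fin k) : c i < a := by
  obtain ⟨h1, hs⟩ := mem_compositions' hc
  have : Nontrivial (Fin k) := Fin.nontrivial_iff_two_le.mpr hk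
  obtain ⟨j, hj⟩ := exists_ne i
  have hsum : c i + ∑ x ∈ Finset.univ.erase i, c x = a := by
    rw [Finset.add_sum_erase Finset.univ c (mem_univ i), hs]
  have hj' : c j ≤ ∑ x ∈ Finset.univ.erase i, c x :=
    Finset.single_le_sum (fun _ _ => Nat.zero_le _) (by simp [hj])
  have := h1 j
  omega

lemma exists_part_lt {k a b : ℕ} {c d : Fin k → ℕ} (hc : c ∈ compositions a k)
    (hd : d ∈ compositions b k) (hab : a < b) : ∃ i, c i < d i := by
  by_contra h
  push_neg at h
  have := Finset.sum_le_sum (fun i (_ : i ∈ Finset.univ) => h i)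
  rw [(mem_compositions' hc).2, (mem_compositions' hd).2] at this
  omega

lemma dsum_zero (E : ℕ → ℕ → ℚ) {k a b : ℕ} (hk : 2 ≤ k) (hab : a < b)
    (hE : ∀ m h, m < a → m ≤ h → E m h = 0) :
    ∑ c ∈ compositions a k, ∑ d ∈ compositions b k, ∏ i, E (c i) (d i - 1) = 0 := by
  refine Finset.sum_eq_zero fun c hc => Finset.sum_eq_zero fun d hd => ?_
  obtain ⟨i, hi⟩ := exists_part_lt hc hd hab
  refine Finset.prod_eq_zero (mem_univ i) (hE _ _ (comp_part_lt hk hc i) ?_)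
  have := (mem_compositions' hd).1 i
  omega

lemma psum_zero (E : ℕ → ℕ → ℚ) {a m g : ℕ} (ha : 1 ≤ a) (h : m < g)
    (hE : ∀ m' h', m' < m → m' ≤ h' → E m' h' = 0) :
    ∑ c ∈ palCompositions m (2 * a + 1), ∑ d ∈ palCompositions g (2 * a + 1),
      ∏ i : Fin (a + 1),
        E (c (Fin.castLE (by omega) i)) (d (Fin.castLE (by omega) i) - 1) = 0 := by
  refine Finset.sum_eq_zero fun c hc => Finset.sum_eq_zero fun d hd => ?_
  simp only [palCompositions, mem_filter] at hc hd
  obtain ⟨hcc, hcp⟩ := hc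
  obtain ⟨hdc, hdp⟩ := hd
  have hle : a + 1 ≤ 2 * a + 1 := by omega
  have key : ∃ i : Fin (a + 1), c (Fin.castLE hle i) < d (Fin.castLE hle i) := by
    by_contra hcon
    push_neg at hcon
    have hall : ∀ j : Fin (2 * a + 1), d j ≤ c j := by
      intro j
      rcases le_or_gt j.val a with hja | hja
      · have : j = Fin.castLE hle ⟨j.val, by omega⟩ := by ext; rfl
        rw [this]; exact hcon _
      · have hrv : (j.rev : ℕ) ≤ a := by
          have : (j.rev : ℕ) = 2 * a + 1 - (j.val + 1) := by
            simp [Fin.val_rev]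
          omega
        have hjr : j.rev = Fin.castLE hle ⟨(j.rev : ℕ), by omega⟩ := by ext; rfl
        calc d j = d j.rev := hdp j
          _ ≤ c j.rev := by rw [hjr]; exact hcon _
          _ = c j := (hcp j).symm
    have := Finset.sum_le_sum (fun i (_ : i ∈ Finset.univ) => hall i)
    rw [(mem_compositions' hcc).2, (mem_compositions' hdc).2] at this
    omega
  obtain ⟨i, hi⟩ := key
  refine Finset.prod_eq_zero (mem_univ i) (hE _ _ (comp_part_lt (by omega) hcc _) ?_)
  have := (mem_compositions' hdc).1 (Fin.castLE hle i)
  omega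

lemma conv_catalan (E : ℕ → ℕ → ℚ) {n : ℕ} (hn : 2 ≤ n)
    (hvan : ∀ m h, m ≤ h → E m h = 0)
    (hcat : ∀ m, 1 ≤ m → m < n → E m (m - 1) = catalan (m - 1)) :
    ∑ c ∈ compositions n 2, ∑ d ∈ compositions n 2, ∏ i : Fin 2, E (c i) (d i - 1)
      = catalan (n - 1) := by
  have step1 : ∀ c ∈ compositions n 2,
      ∑ d ∈ compositions n 2, ∏ i : Fin 2, E (c i) (d i - 1)
        = ∏ i : Fin 2, E (c i) (c i - 1) := by
    intro c hc
    refine Finset.sum_eq_single_of_mem c hc fun d hd hne => ?_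
    obtain ⟨hc1, hcs⟩ := mem_compositions' hc
    obtain ⟨hd1, hds⟩ := mem_compositions' hd
    rw [Fin.sum_univ_two] at hcs hds
    by_cases h0 : c 0 < d 0
    · exact Finset.prod_eq_zero (mem_univ 0) (hvan _ _ (by have := hd1 0; omega))
    by_cases h1 : c 1 < d 1
    · exact Finset.prod_eq_zero (mem_univ 1) (hvan _ _ (by have := hd1 1; omega))
    · exfalso
      apply hne
      funext i
      fin_cases i
      · show d 0 = c 0; omega
      · show d 1 = c 1; omega
  rw [Finset.sum_congr rfl step1]
  rw [show n - 1 = (n - 2) + 1 by omega, catalan_succ']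
  push_cast
  refine Finset.sum_nbij' (fun c => (c 0 - 1, c 1 - 1)) (fun p => ![p.1 + 1, p.2 + 1])
    ?_ ?_ ?_ ?_ ?_
  · intro c hc
    obtain ⟨hc1, hcs⟩ := mem_compositions' hc
    rw [Fin.sum_univ_two] at hcs
    simp only [Finset.HasAntidiagonal.mem_antidiagonal]
    have := hc1 0; have := hc1 1
    omega
  · intro p hp
    simp only [Finset.HasAntidiagonal.mem_antidiagonal] at hp
    simp only [compositions, mem_filter, Fintype.mem_piFinset, Finset.mem_Icc,
      Fin.sum_univ_two]
    constructor
    · intro i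
      fin_cases i <;> simp <;> omega
    · simp; omega
  · intro c hc
    obtain ⟨hc1, _⟩ := mem_compositions' hc
    funext i
    fin_cases i
    · show c 0 - 1 + 1 = c 0; have := hc1 0; omega
    · show c 1 - 1 + 1 = c 1; have := hc1 1; omega
  · intro p hp
    simp
  · intro c hc
    obtain ⟨hc1, _⟩ := mem_compositions' hc
    have h0 := comp_part_lt (le_refl 2) hc 0
    have h1 := comp_part_lt (le_refl 2) hc 1
    rw [Fin.prod_univ_two, hcat (c 0) (hc1 0) h0, hcat (c 1) (hc1 1) h1]

/-- If `Ẽ : ℕ × ℕ → ℚ` satisfies `Ẽ(1,0)=1`, `Ẽ(1,g)=0` for `g ≥ 1`, `Ẽ(0,g)=0`, and for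
`n ≥ 2` the recursion counting unlabeled general galled trees with `n` leaves and `g` galls,
then `Ẽ(n, n−1) = C_{n−1}` for all `n ≥ 1`. -/
theorem stmt9 (E : ℕ → ℕ → ℚ)
    (h10 : E 1 0 = 1)
    (h1g : ∀ g, 1 ≤ g → E 1 g = 0)
    (h0g : ∀ g, E 0 g = 0)
    (hrec : ∀ n g, 2 ≤ n →
      E n g = (1 / 2) *
        ((∑ c ∈ compositions n 2, ∑ d ∈ compositions (g + 2) 2,
            ∏ i : Fin 2, E (c i) (d i - 1))
         + (if Even n ∧ Even g then E (n / 2) (g / 2) else 0)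
         + (∑ k ∈ Finset.Icc 3 n, ((k : ℚ) - 2) *
             ∑ c ∈ compositions n k, ∑ d ∈ compositions (g + k - 1) k,
               ∏ i : Fin k, E (c i) (d i - 1))
         + (∑ a ∈ Finset.Icc 1 ((n - 1) / 2),
             ∑ c ∈ palCompositions n (2 * a + 1),
               ∑ d ∈ palCompositions (g + 2 * a) (2 * a + 1),
                 ∏ i : Fin (a + 1),
                   E (c (Fin.castLE (by omega) i)) (d (Fin.castLE (by omega) i) - 1)))
      + (∑ k ∈ Finset.Icc 2 n, ∑ c ∈ compositions n k, ∑ d ∈ compositions (g + k - 1) k,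
          ∏ i : Fin k, E (c i) (d i - 1))) :
    ∀ n, 1 ≤ n → E n (n - 1) = catalan (n - 1) := by
  -- The vanishing lemma: E m h = 0 whenever m ≤ h.
  have hvan : ∀ m h, m ≤ h → E m h = 0 := by
    intro m
    induction m using Nat.strong_induction_on with
    | _ m IH =>
      intro g hg
      match m, hg with
      | 0, _ => exact h0g g
      | 1, hg => exact h1g g hg
      | (m + 2), hg =>
        set M := m + 2 with hM
        have hm2 : 2 ≤ M := by omega
        have hIH : ∀ m' h, m' < M → m' ≤ h → E m' h = 0 := fun m' h a b => IH m' a h b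
        rw [hrec M g hm2]
        have t1 : ∑ c ∈ compositions M 2, ∑ d ∈ compositions (g + 2) 2,
            ∏ i : Fin 2, E (c i) (d i - 1) = 0 :=
          dsum_zero E (le_refl 2) (by omega) hIH
        have t2 : (if Even M ∧ Even g then E (M / 2) (g / 2) else 0) = 0 := by
          split
          · exact hIH (M / 2) (g / 2) (Nat.div_lt_self (by omega) one_lt_two)
              (Nat.div_le_div_right hg)
          · rfl
        have t3 : (∑ k ∈ Finset.Icc 3 M, ((k : ℚ) - 2) *
            ∑ c ∈ compositions M k, ∑ d ∈ compositions (g + k - 1) k,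
              ∏ i : Fin k, E (c i) (d i - 1)) = 0 := by
          refine Finset.sum_eq_zero fun k hk => ?_
          rw [Finset.mem_Icc] at hk
          rw [dsum_zero E (by omega) (by omega) hIH, mul_zero]
        have t4 : (∑ a ∈ Finset.Icc 1 ((M - 1) / 2),
            ∑ c ∈ palCompositions M (2 * a + 1),
              ∑ d ∈ palCompositions (g + 2 * a) (2 * a + 1),
                ∏ i : Fin (a + 1),
                  E (c (Fin.castLE (by omega) i)) (d (Fin.castLE (by omega) i) - 1)) = 0 := by
          refine Finset.sum_eq_zero fun a ha => ?_
          rw [Finset.mem_Icc] at ha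
          exact psum_zero E ha.1 (by omega) hIH
        have t5 : (∑ k ∈ Finset.Icc 2 M, ∑ c ∈ compositions M k,
            ∑ d ∈ compositions (g + k - 1) k, ∏ i : Fin k, E (c i) (d i - 1)) = 0 := by
          refine Finset.sum_eq_zero fun k hk => ?_
          rw [Finset.mem_Icc] at hk
          exact dsum_zero E hk.1 (by omega) hIH
        rw [t1, t2, t3, t4, t5]
        ring
  intro n
  induction n using Nat.strong_induction_on with
  | _ n IH =>
    intro hn
    rcases eq_or_lt_of_le hn with h1 | h2
    · rw [← h1]
      simpa using h10
    · have hn2 : 2 ≤ n := h2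
      rw [hrec n (n - 1) hn2]
      have t1 : ∑ c ∈ compositions n 2, ∑ d ∈ compositions (n - 1 + 2) 2,
          ∏ i : Fin 2, E (c i) (d i - 1) = 0 :=
        dsum_zero E (le_refl 2) (by omega) (fun m h _ hmh => hvan m h hmh)
      have t2 : (if Even n ∧ Even (n - 1) then E (n / 2) ((n - 1) / 2) else 0) = 0 := by
        rw [if_neg]
        rintro ⟨⟨p, hp⟩, ⟨q, hq⟩⟩
        omega
      have t3 : (∑ k ∈ Finset.Icc 3 n, ((k : ℚ) - 2) *
          ∑ c ∈ compositions n k, ∑ d ∈ compositions (n - 1 + k - 1) k,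
            ∏ i : Fin k, E (c i) (d i - 1)) = 0 := by
        refine Finset.sum_eq_zero fun k hk => ?_
        rw [Finset.mem_Icc] at hk
        rw [dsum_zero E (by omega) (by omega) (fun m h _ hmh => hvan m h hmh), mul_zero]
      have t4 : (∑ a ∈ Finset.Icc 1 ((n - 1) / 2),
          ∑ c ∈ palCompositions n (2 * a + 1),
            ∑ d ∈ palCompositions (n - 1 + 2 * a) (2 * a + 1),
              ∏ i : Fin (a + 1),
                E (c (Fin.castLE (by omega) i)) (d (Fin.castLE (by omega) i) - 1)) = 0 := by
        refine Finset.sum_eq_zero fun a ha => ?_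
        rw [Finset.mem_Icc] at ha
        exact psum_zero E ha.1 (by omega) (fun m' h' _ hmh => hvan m' h' hmh)
      have t5 : (∑ k ∈ Finset.Icc 2 n, ∑ c ∈ compositions n k,
          ∑ d ∈ compositions (n - 1 + k - 1) k, ∏ i : Fin k, E (c i) (d i - 1))
          = catalan (n - 1) := by
        rw [Finset.sum_eq_single_of_mem 2 (Finset.mem_Icc.mpr ⟨le_refl 2, hn2⟩)
          (fun k hk hne => ?_)]
        · have hidx : n - 1 + 2 - 1 = n := by omega
          rw [hidx]
          exact conv_catalan E hn2 hvan (fun m h1' h2' => IH m h2' h1')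
        · rw [Finset.mem_Icc] at hk
          exact dsum_zero E hk.1 (by omega) (fun m h _ hmh => hvan m h hmh)
      rw [t1, t2, t3, t4, t5]
      ring
end

section
/- Let E¹ : ℕ × ℕ → ℚ be defined by E¹(1,0) = 1, E¹(1,g) = 0 for g ≥ 1, E¹(0,g) = 0 for all g, and for n ≥ 2 and all g ≥ 0: E¹(n,g) = (1/2)·[ Σ over compositions (c_1,c_2) of n into 2 parts and compositions (d_1,d_2) of g+2 into 2 parts of E¹(c_1,d_1−1)·E¹(c_2,d_2−1) + (if n and g are both even then E¹(n/2,g/2) else 0) + Σ_{k=3}^{n} (k−2)·Σ over compositions (c_1,…,c_{k−1}) of n−1 into k−1 parts and compositions (d_1,…,d_{k−1}) of g−1+(k−1) into k−1 parts of Π_{i=1}^{k−1} E¹(c_i,d_i−1) + (if n and g are both odd then Σ_{a=1}^{(n−1)/2} Σ over compositions (c_1,…,c_a) of (n−1)/2 into a parts and compositions (d_1,…,d_a) of (g−1)/2 + a into a parts of Π_{i=1}^{a} E¹(c_i,d_i−1) else 0) ]. (This recursion counts unlabeled simplex time-consistent galled trees with n leaves and g galls.) Let U : ℕ → ℚ be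 the Wedderburn–Etherington sequence: U(0) = 0, U(1) = 1, and for n ≥ 2, U(n) = (1/2)·(Σ_{m=1}^{n−1} U(m)·U(n−m) + (if n is even then U(n/2) else 0)). Then for every integer m ≥ 0, E¹(2m+1, m) = U(m+1). -/
open Finset

lemma mem_comp {a b : ℕ} {c : Fin b → ℕ} :
    c ∈ compositions a b ↔ (∀ i, 1 ≤ c i ∧ c i ≤ a) ∧ ∑ i, c i = a := by
  simp [compositions, Fintype.mem_piFinset]

lemma prod_zero (E : ℕ → ℕ → ℚ) (n : ℕ)
    (IH0 : ∀ p, p < n → ∀ q, p ≤ 2*q → E p q = 0)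
    {b : ℕ} (c d : Fin b → ℕ) (hcn : ∀ i, c i < n) (hd1 : ∀ i, 1 ≤ d i)
    (hlt : (∑ i, c i) + b < 2 * ∑ i, d i) :
    ∏ i, E (c i) (d i - 1) = 0 := by
  obtain ⟨i, hi⟩ : ∃ i, c i + 1 < 2 * d i := by
    by_contra h
    push_neg at h
    have : 2 * ∑ i, d i ≤ ∑ i : Fin b, (c i + 1) := by
      rw [Finset.mul_sum]
      exact Finset.sum_le_sum fun i _ => h i
    simp [Finset.sum_add_distrib] at this
    omega
  exact Finset.prod_eq_zero (Finset.mem_univ i)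
    (IH0 _ (hcn i) _ (by have := hd1 i; omega))

lemma compositions_one (a : ℕ) (ha : 1 ≤ a) :
    compositions a 1 = {fun _ => a} := by
  ext c
  simp only [mem_comp, Finset.mem_singleton, Fin.sum_univ_one]
  constructor
  · rintro ⟨h1, h2⟩
    funext i
    rw [Subsingleton.elim i 0]; exact h2
  · rintro rfl
    exact ⟨fun i => ⟨ha, le_refl a⟩, rfl⟩

lemma sum_comp_two (a : ℕ) (f : ℕ → ℕ → ℚ) :
    ∑ c ∈ compositions a 2, f (c 0) (c 1) = ∑ m ∈ Finset.Ico 1 a, f m (a - m) := by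
  apply Finset.sum_nbij' (fun c => c 0) (fun m => ![m, a - m])
  · intro c hc
    rw [mem_comp] at hc
    obtain ⟨h1, h2⟩ := hc
    rw [Fin.sum_univ_two] at h2
    have := (h1 0).1; have := (h1 1).1
    simp only [Finset.mem_Ico]; omega
  · intro m hm
    simp only [Finset.mem_Ico] at hm
    rw [mem_comp]
    constructor
    · intro i
      fin_cases i <;> simp <;> omega
    · rw [Fin.sum_univ_two]; simp; omega
  · intro c hc
    rw [mem_comp] at hc
    obtain ⟨h1, h2⟩ := hc
    rw [Fin.sum_univ_two] at h2
    funext i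
    fin_cases i <;> simp <;> omega
  · intro m hm; simp
  · intro c hc
    rw [mem_comp] at hc
    obtain ⟨h1, h2⟩ := hc
    rw [Fin.sum_univ_two] at h2
    congr 1
    omega

lemma key3 (E : ℕ → ℕ → ℚ) (U : ℕ → ℚ) (g : ℕ)
    (IH0 : ∀ p, p < 2*g+1 → ∀ q, p ≤ 2*q → E p q = 0)
    (IHd : ∀ p, p < 2*g+1 → ∀ q, p = 2*q+1 → E p q = U (q+1)) :
    ∑ c ∈ compositions (2*g) 2, ∑ d ∈ compositions (g+1) 2, ∏ i : Fin 2, E (c i) (d i - 1)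
      = ∑ m ∈ Finset.Ico 1 (g+1), U m * U (g+1-m) := by
  calc ∑ c ∈ compositions (2*g) 2, ∑ d ∈ compositions (g+1) 2, ∏ i : Fin 2, E (c i) (d i - 1)
      = ∑ c ∈ compositions (2*g) 2, ∑ d ∈ compositions (g+1) 2,
          E (c 0) (d 0 - 1) * E (c 1) (d 1 - 1) := by
        simp [Fin.prod_univ_two]
    _ = ∑ p ∈ Finset.Ico 1 (2*g), ∑ d ∈ compositions (g+1) 2,
          E p (d 0 - 1) * E (2*g - p) (d 1 - 1) :=
        sum_comp_two (2*g) (fun p q => ∑ d ∈ compositions (g+1) 2, E p (d 0 - 1) * E q (d 1 - 1))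
    _ = ∑ p ∈ Finset.Ico 1 (2*g), ∑ q ∈ Finset.Ico 1 (g+1),
          E p (q - 1) * E (2*g - p) (g + 1 - q - 1) :=
        Finset.sum_congr rfl fun p _ =>
          sum_comp_two (g+1) (fun x y => E p (x - 1) * E (2*g - p) (y - 1))
    _ = ∑ q ∈ Finset.Ico 1 (g+1), ∑ p ∈ Finset.Ico 1 (2*g),
          E p (q - 1) * E (2*g - p) (g + 1 - q - 1) := Finset.sum_comm
    _ = ∑ q ∈ Finset.Ico 1 (g+1), U q * U (g + 1 - q) := by
        apply Finset.sum_congr rfl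
        intro q hq
        simp only [Finset.mem_Ico] at hq
        have hz : ∀ p ∈ Finset.Ico 1 (2*g), p ≠ 2*q-1 →
            E p (q-1) * E (2*g-p) (g+1-q-1) = 0 := by
          intro p hp hpne
          simp only [Finset.mem_Ico] at hp
          rcases le_or_gt p (2*(q-1)) with h | h
          · rw [IH0 p (by omega) (q-1) h, zero_mul]
          · rw [IH0 (2*g-p) (by omega) (g+1-q-1) (by omega), mul_zero]
        rw [Finset.sum_eq_single_of_mem (2*q-1) (by simp only [Finset.mem_Ico]; omega) hz]
        have e1 : E (2*q-1) (q-1) = U q := by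
          rw [IHd (2*q-1) (by omega) (q-1) (by omega)]
          congr 1; omega
        have e2 : E (2*g-(2*q-1)) (g+1-q-1) = U (g+1-q) := by
          rw [IHd (2*g-(2*q-1)) (by omega) (g+1-q-1) (by omega)]
          congr 1; omega
        rw [e1, e2]


/-- If `E¹ : ℕ × ℕ → ℚ` satisfies the recursion counting unlabeled simplex time-consistent
galled trees with `n` leaves and `g` galls, and `U` is the Wedderburn–Etherington sequence,
then `E¹(2m+1, m) = U(m+1)` for all `m ≥ 0`. -/
theorem stmt11 (E : ℕ → ℕ → ℚ) (U : ℕ → ℚ)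
    (h10 : E 1 0 = 1)
    (h1g : ∀ g, 1 ≤ g → E 1 g = 0)
    (h0g : ∀ g, E 0 g = 0)
    (hrec : ∀ n g, 2 ≤ n →
      E n g = (1 / 2) *
        ((∑ c ∈ compositions n 2, ∑ d ∈ compositions (g + 2) 2,
            ∏ i : Fin 2, E (c i) (d i - 1))
         + (if Even n ∧ Even g then E (n / 2) (g / 2) else 0)
         + (∑ k ∈ Finset.Icc 3 n, ((k : ℚ) - 2) *
             ∑ c ∈ compositions (n - 1) (k - 1),
               ∑ d ∈ compositions (g + (k - 1) - 1) (k - 1),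
                 ∏ i : Fin (k - 1), E (c i) (d i - 1))
         + (if Odd n ∧ Odd g then
             ∑ a ∈ Finset.Icc 1 ((n - 1) / 2),
               ∑ c ∈ compositions ((n - 1) / 2) a,
                 ∑ d ∈ compositions ((g - 1) / 2 + a) a,
                   ∏ i : Fin a, E (c i) (d i - 1)
           else 0)))
    (hU0 : U 0 = 0)
    (hU1 : U 1 = 1)
    (hUrec : ∀ n, 2 ≤ n →
      U n = (1 / 2) * ((∑ m ∈ Finset.Ico 1 n, U m * U (n - m))
        + if Even n then U (n / 2) else 0)) :
    ∀ m : ℕ, E (2 * m + 1) m = U (m + 1) := by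
  suffices H : ∀ n, (∀ g, n ≤ 2*g → E n g = 0) ∧ (∀ g, n = 2*g+1 → E n g = U (g+1)) by
    intro m
    exact (H (2*m+1)).2 m rfl
  intro n
  induction n using Nat.strong_induction_on with
  | _ n IH =>
  match n, IH with
  | 0, _ => exact ⟨fun g _ => h0g g, fun g hg => by omega⟩
  | 1, _ =>
    refine ⟨fun g hg => h1g g (by omega), fun g hg => ?_⟩
    have : g = 0 := by omega
    subst this
    rw [h10, hU1]
  | (m+2), IH =>
    set N := m + 2 with hN
    have hN2 : 2 ≤ N := by omega
    have IH0 : ∀ p, p < N → ∀ q, p ≤ 2*q → E p q = 0 := fun p hp => (IH p hp).1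
    have IHd : ∀ p, p < N → ∀ q, p = 2*q+1 → E p q = U (q+1) := fun p hp => (IH p hp).2
    -- block A vanishes whenever N ≤ 2g+1
    have blockA : ∀ g, N ≤ 2*g+1 →
        (∑ c ∈ compositions N 2, ∑ d ∈ compositions (g + 2) 2,
          ∏ i : Fin 2, E (c i) (d i - 1)) = 0 := by
      intro g hg
      apply Finset.sum_eq_zero
      intro c hc
      apply Finset.sum_eq_zero
      intro d hd
      rw [mem_comp] at hc hd
      apply prod_zero E N IH0
      · intro i
        have h0 := (hc.1 0).1
        have h1 := (hc.1 1).1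
        have hs := hc.2
        rw [Fin.sum_univ_two] at hs
        have hi := (hc.1 i).2
        have : i = 0 ∨ i = 1 := by omega
        rcases this with h | h <;> rw [h] <;> omega
      · exact fun i => (hd.1 i).1
      · rw [hc.2, hd.2]; omega
    -- block C term vanishes when N + 3 ≤ 2g + k
    have blockC : ∀ g k, 3 ≤ k → N + 3 ≤ 2*g + k →
        (∑ c ∈ compositions (N-1) (k-1),
          ∑ d ∈ compositions (g + (k-1) - 1) (k-1),
            ∏ i : Fin (k-1), E (c i) (d i - 1)) = 0 := by
      intro g k hk3 hkN
      apply Finset.sum_eq_zero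
      intro c hc
      apply Finset.sum_eq_zero
      intro d hd
      rw [mem_comp] at hc hd
      apply prod_zero E N IH0
      · intro i
        have := (hc.1 i).2
        omega
      · exact fun i => (hd.1 i).1
      · rw [hc.2, hd.2]; omega
    -- block D term vanishes
    have blockD : ∀ g a, g % 2 = 1 → (N-1)/2 + a + 1 ≤ g - 1 + 2*a →
        (∑ c ∈ compositions ((N-1)/2) a,
          ∑ d ∈ compositions ((g-1)/2 + a) a,
            ∏ i : Fin a, E (c i) (d i - 1)) = 0 := by
      intro g a hgo hcond
      apply Finset.sum_eq_zero
      intro c hc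
      apply Finset.sum_eq_zero
      intro d hd
      rw [mem_comp] at hc hd
      apply prod_zero E N IH0
      · intro i
        have := (hc.1 i).2
        omega
      · exact fun i => (hd.1 i).1
      · rw [hc.2, hd.2]; omega
    constructor
    · -- vanishing: N ≤ 2g
      intro g hg
      rw [hrec N g hN2]
      rw [blockA g (by omega)]
      have hB : (if Even N ∧ Even g then E (N/2) (g/2) else 0) = 0 := by
        split_ifs with h
        · obtain ⟨hn, hgE⟩ := h
          rw [Nat.even_iff] at hn hgE
          exact IH0 _ (by omega) _ (by omega)
        · rfl
      have hC : (∑ k ∈ Finset.Icc 3 N, ((k : ℚ) - 2) *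
          ∑ c ∈ compositions (N - 1) (k - 1),
            ∑ d ∈ compositions (g + (k - 1) - 1) (k - 1),
              ∏ i : Fin (k - 1), E (c i) (d i - 1)) = 0 := by
        apply Finset.sum_eq_zero
        intro k hk
        simp only [Finset.mem_Icc] at hk
        rw [blockC g k hk.1 (by omega), mul_zero]
      have hD : (if Odd N ∧ Odd g then
          ∑ a ∈ Finset.Icc 1 ((N - 1) / 2),
            ∑ c ∈ compositions ((N - 1) / 2) a,
              ∑ d ∈ compositions ((g - 1) / 2 + a) a,
                ∏ i : Fin a, E (c i) (d i - 1)
        else 0) = 0 := by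
        split_ifs with h
        · obtain ⟨hn, hgO⟩ := h
          rw [Nat.odd_iff] at hn hgO
          apply Finset.sum_eq_zero
          intro a ha
          simp only [Finset.mem_Icc] at ha
          exact blockD g a hgO (by omega)
        · rfl
      rw [hB, hC, hD]
      norm_num
    · -- diagonal: N = 2g+1
      intro g hNg
      have hg1 : 1 ≤ g := by omega
      rw [hrec N g hN2]
      rw [blockA g (by omega)]
      have hB : (if Even N ∧ Even g then E (N/2) (g/2) else 0) = 0 := by
        rw [if_neg]
        rintro ⟨hE, -⟩
        rw [Nat.even_iff] at hE
        omega
      have hC : (∑ k ∈ Finset.Icc 3 N, ((k : ℚ) - 2) *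
          ∑ c ∈ compositions (N - 1) (k - 1),
            ∑ d ∈ compositions (g + (k - 1) - 1) (k - 1),
              ∏ i : Fin (k - 1), E (c i) (d i - 1))
          = ∑ x ∈ Finset.Ico 1 (g+1), U x * U (g+1-x) := by
        have hz : ∀ k ∈ Finset.Icc 3 N, k ≠ 3 → ((k : ℚ) - 2) *
            (∑ c ∈ compositions (N - 1) (k - 1),
            ∑ d ∈ compositions (g + (k - 1) - 1) (k - 1),
              ∏ i : Fin (k - 1), E (c i) (d i - 1)) = 0 := by
          intro k hk hk3
          simp only [Finset.mem_Icc] at hk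
          rw [blockC g k hk.1 (by omega), mul_zero]
        rw [Finset.sum_eq_single_of_mem 3 (by simp only [Finset.mem_Icc]; omega) hz]
        have e1 : N - 1 = 2*g := by omega
        have e2 : g + (3-1) - 1 = g + 1 := by omega
        rw [e1, e2]
        rw [key3 E U g (fun p hp => IH0 p (by omega)) (fun p hp => IHd p (by omega))]
        norm_num
      rw [hB, hC]
      rw [hUrec (g+1) (by omega)]
      rcases Nat.even_or_odd g with hge | hgo
      · -- g even
        have hD : (if Odd N ∧ Odd g then
            ∑ a ∈ Finset.Icc 1 ((N - 1) / 2),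
              ∑ c ∈ compositions ((N - 1) / 2) a,
                ∑ d ∈ compositions ((g - 1) / 2 + a) a,
                  ∏ i : Fin a, E (c i) (d i - 1)
          else 0) = 0 := by
          rw [if_neg]
          rintro ⟨-, hO⟩
          exact (Nat.not_odd_iff_even.mpr hge) hO
        rw [hD]
        rw [if_neg (by rw [Nat.even_iff] at hge ⊢; omega)]
        ring
      · -- g odd
        rw [Nat.odd_iff] at hgo
        have hD : (if Odd N ∧ Odd g then
            ∑ a ∈ Finset.Icc 1 ((N - 1) / 2),
              ∑ c ∈ compositions ((N - 1) / 2) a,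
                ∑ d ∈ compositions ((g - 1) / 2 + a) a,
                  ∏ i : Fin a, E (c i) (d i - 1)
          else 0) = U ((g+1)/2) := by
          rw [if_pos ⟨Nat.odd_iff.mpr (by omega), Nat.odd_iff.mpr hgo⟩]
          have hz : ∀ a ∈ Finset.Icc 1 ((N-1)/2), a ≠ 1 →
              (∑ c ∈ compositions ((N - 1) / 2) a,
                ∑ d ∈ compositions ((g - 1) / 2 + a) a,
                  ∏ i : Fin a, E (c i) (d i - 1)) = 0 := by
            intro a ha ha1
            simp only [Finset.mem_Icc] at ha
            exact blockD g a hgo (by omega)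
          rw [Finset.sum_eq_single_of_mem 1 (by simp only [Finset.mem_Icc]; omega) hz]
          have e1 : (N-1)/2 = g := by omega
          rw [e1, compositions_one g hg1, compositions_one ((g-1)/2 + 1) (by omega)]
          rw [Finset.sum_singleton, Finset.sum_singleton]
          rw [Fin.prod_univ_one]
          have e3 : (g-1)/2 + 1 - 1 = (g-1)/2 := by omega
          rw [e3]
          rw [IHd g (by omega) ((g-1)/2) (by omega)]
          congr 1
          omega
        rw [hD]
        rw [if_pos (by rw [Nat.even_iff]; omega)]
        ring
end

section
/- Let e¹ : ℕ × ℕ → ℚ be defined by e¹(1,0) = 1, e¹(1,g) = 0 for g ≥ 1, e¹(0,g) = 0 for all g, and for n ≥ 2 and all g ≥ 0: e¹(n,g) = (1/2)·[ Σ_{m=1}^{n−1} binom(n,m)·Σ_{ℓ=0}^{g} e¹(m,ℓ)·e¹(n−m,g−ℓ) + Σ_{k=3}^{n} (k−2)·Σ over compositions (c_1,…,c_{k−1}) of n−1 into k−1 parts and compositions (d_1,…,d_{k−1}) of g−1+(k−1) into k−1 parts of n·((n−1)!/(c_1!·c_2!⋯c_{k−1}!))·Π_{i=1}^{k−1} e¹(c_i,d_i−1)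 ]. (This recursion counts leaf-labeled simplex time-consistent galled trees with n leaves and g galls.) Then for every integer m ≥ 1, e¹(2m+1, m) = (2m−1)!!·(2m+1)!/(m+1)!, where (2m−1)!! denotes the double factorial of 2m−1. -/
open Finset

noncomputable def Fq (m : ℕ) : ℚ := ((2*m+1).factorial : ℚ) * catalan m / 2^m

lemma cat_df (m : ℕ) : catalan m * (m+1).factorial = 2^m * Nat.doubleFactorial (2*m-1) := by
  have h1 : (m+1) * catalan m = m.centralBinom := succ_mul_catalan_eq_centralBinom m
  have h2 : (2*m).choose m * (m.factorial * m.factorial) = (2*m).factorial := by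
    have := Nat.choose_mul_factorial_mul_factorial (show m ≤ 2*m by omega)
    have h2m : 2*m - m = m := by omega
    rw [h2m] at this
    linarith [this]
  have h3 : (2*m).factorial = 2^m * m.factorial * Nat.doubleFactorial (2*m-1) := by
    rcases Nat.eq_zero_or_pos m with hm | hm
    · simp [hm, Nat.doubleFactorial]
    · have e1 : (2*m-1)+1 = 2*m := by omega
      have h := Nat.factorial_eq_mul_doubleFactorial (2*m-1)
      rw [e1] at h
      rw [h, Nat.doubleFactorial_two_mul]
  have hcb : m.centralBinom = (2*m).choose m := rfl
  have key : catalan m * (m+1).factorial * m.factorial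
      = 2^m * Nat.doubleFactorial (2*m-1) * m.factorial := by
    have : catalan m * (m+1).factorial * m.factorial
        = ((m+1) * catalan m) * (m.factorial * m.factorial) := by
      rw [Nat.factorial_succ]; ring
    rw [this, h1, hcb, h2, h3]; ring
  exact Nat.eq_of_mul_eq_mul_right (Nat.factorial_pos m) key

lemma Fq_eq (m : ℕ) : Fq m = (Nat.doubleFactorial (2*m-1) : ℚ) * ((2*m+1).factorial : ℚ)
    / ((m+1).factorial : ℚ) := by
  have h := cat_df m
  have h2 : ((catalan m : ℚ)) * ((m+1).factorial : ℚ) = 2^m * (Nat.doubleFactorial (2*m-1) : ℚ) := by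
    exact_mod_cast congrArg (Nat.cast : ℕ → ℚ) h
  rw [Fq]
  have hfac : ((m+1).factorial : ℚ) ≠ 0 := Nat.cast_ne_zero.mpr (Nat.factorial_ne_zero _)
  have h2p : (2:ℚ)^m ≠ 0 := by positivity
  field_simp
  nlinarith [h2]

lemma conv (m' : ℕ) :
    ∑ ℓ ∈ range (m'+1), ((2*(m'+1)+1 : ℕ):ℚ) *
      (((2*(m'+1)).factorial : ℚ) / (((2*ℓ+1).factorial :ℚ) * ((2*((m'+1)-1-ℓ)+1).factorial : ℚ))) *
      (Fq ℓ * Fq ((m'+1)-1-ℓ)) = 2 * Fq (m'+1) := by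
  have hstep : ∀ ℓ ∈ range (m'+1), ((2*(m'+1)+1 : ℕ):ℚ) *
      (((2*(m'+1)).factorial : ℚ) / (((2*ℓ+1).factorial :ℚ) * ((2*((m'+1)-1-ℓ)+1).factorial : ℚ))) *
      (Fq ℓ * Fq ((m'+1)-1-ℓ))
      = ((2*(m'+1)+1 : ℕ):ℚ) * ((2*(m'+1)).factorial : ℚ) / 2^m'
        * ((catalan ℓ * catalan (m'-ℓ) : ℕ) : ℚ) := by
    intro ℓ hℓ
    simp only [mem_range] at hℓ
    obtain ⟨j, hj⟩ : ∃ j, ℓ + j = m' := ⟨m' - ℓ, by omega⟩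
    have hsub : (m'+1)-1-ℓ = j := by omega
    have hsub2 : m' - ℓ = j := by omega
    rw [hsub, hsub2, Fq, Fq]
    have hp : (2:ℚ)^ℓ * 2^j = 2^m' := by rw [← pow_add, hj]
    have f1 : ((2*ℓ+1).factorial : ℚ) ≠ 0 := Nat.cast_ne_zero.mpr (Nat.factorial_ne_zero _)
    have f2 : ((2*j+1).factorial : ℚ) ≠ 0 := Nat.cast_ne_zero.mpr (Nat.factorial_ne_zero _)
    have p1 : (2:ℚ)^ℓ ≠ 0 := by positivity
    have p2 : (2:ℚ)^j ≠ 0 := by positivity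
    have p3 : (2:ℚ)^m' ≠ 0 := by positivity
    push_cast
    field_simp
    rw [← hp]
    ring
  rw [Finset.sum_congr rfl hstep, ← Finset.mul_sum, ← Nat.cast_sum]
  have hcat : ∑ ℓ ∈ range (m'+1), catalan ℓ * catalan (m'-ℓ) = catalan (m'+1) := by
    rw [catalan_succ m']; exact (Fin.sum_univ_eq_sum_range (fun i => catalan i * catalan (m' - i)) (m'+1)).symm
  rw [hcat, Fq]
  have hfs : ((2*(m'+1)+1).factorial : ℚ) = ((2*(m'+1)+1 : ℕ) : ℚ) * ((2*(m'+1)).factorial : ℚ) := by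
    rw [Nat.factorial_succ]; push_cast; ring
  rw [hfs]
  have p3 : (2:ℚ)^(m'+1) ≠ 0 := by positivity
  field_simp
  ring

/-- If `e¹ : ℕ × ℕ → ℚ` satisfies the recursion counting leaf-labeled simplex time-consistent
galled trees with `n` leaves and `g` galls (where `Nat.multinomial univ c = (n−1)!/(c₁!⋯c_{k−1}!)`
for a composition `c` of `n−1`), then `e¹(2m+1, m) = (2m−1)!!·(2m+1)!/(m+1)!` for all `m ≥ 1`. -/
theorem stmt12 (e : ℕ → ℕ → ℚ)
    (h10 : e 1 0 = 1)
    (h1g : ∀ g, 1 ≤ g → e 1 g = 0)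
    (h0g : ∀ g, e 0 g = 0)
    (hrec : ∀ n g, 2 ≤ n →
      e n g = (1 / 2) *
        ((∑ m ∈ Finset.Ico 1 n, (n.choose m : ℚ) *
            ∑ ℓ ∈ Finset.range (g + 1), e m ℓ * e (n - m) (g - ℓ))
         + (∑ k ∈ Finset.Icc 3 n, ((k : ℚ) - 2) *
             ∑ c ∈ compositions (n - 1) (k - 1),
               ∑ d ∈ compositions (g + (k - 1) - 1) (k - 1),
                 (n : ℚ) * (Nat.multinomial Finset.univ c : ℚ) *
                   ∏ i : Fin (k - 1), e (c i) (d i - 1)))) :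
    ∀ m : ℕ, 1 ≤ m →
      e (2 * m + 1) m
        = (Nat.doubleFactorial (2 * m - 1) : ℚ) * (Nat.factorial (2 * m + 1) : ℚ)
            / (Nat.factorial (m + 1) : ℚ) := by
  have hvanish : ∀ n, ∀ g : ℕ, n ≤ 2*g → e n g = 0 := by
    intro n
    induction n using Nat.strong_induction_on with
    | _ n ih =>
      intro g hg
      rcases n with _ | _ | N
      · exact h0g g
      · exact h1g g (by omega)
      · rw [hrec (N+1+1) g (by omega)]
        have hA : (∑ p ∈ Finset.Ico 1 (N+1+1), ((N+1+1).choose p : ℚ) *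
            ∑ ℓ ∈ Finset.range (g + 1), e p ℓ * e (N+1+1 - p) (g - ℓ)) = 0 := by
          apply Finset.sum_eq_zero
          intro p hp
          simp only [mem_Ico] at hp
          rw [mul_eq_zero]; right
          apply Finset.sum_eq_zero
          intro ℓ hℓ
          simp only [mem_range] at hℓ
          rcases le_or_gt p (2*ℓ) with h | h
          · rw [ih p (by omega) ℓ h, zero_mul]
          · rw [ih (N+1+1-p) (by omega) (g-ℓ) (by omega), mul_zero]
        have hB : (∑ k ∈ Finset.Icc 3 (N+1+1), ((k : ℚ) - 2) *
            ∑ c ∈ compositions (N+1+1-1) (k-1),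
              ∑ d ∈ compositions (g + (k-1) - 1) (k-1),
                ((N+1+1 : ℕ) : ℚ) * (Nat.multinomial Finset.univ c : ℚ) *
                  ∏ i : Fin (k-1), e (c i) (d i - 1)) = 0 := by
          apply Finset.sum_eq_zero
          intro k hk
          simp only [mem_Icc] at hk
          rw [mul_eq_zero]; right
          apply Finset.sum_eq_zero
          intro c hc
          apply Finset.sum_eq_zero
          intro d hd
          simp only [compositions, mem_filter, Fintype.mem_piFinset, mem_Icc] at hc hd
          obtain ⟨hc1, hc2⟩ := hc
          obtain ⟨hd1, hd2⟩ := hd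
          have hex : ∃ i, c i + 2 ≤ 2 * d i := by
            by_contra hno
            push_neg at hno
            have hsum : ∑ i : Fin (k-1), 2 * d i ≤ ∑ i : Fin (k-1), (c i + 1) :=
              Finset.sum_le_sum fun i _ => by have h1 := hno i; omega
            have h2d : ∑ i : Fin (k-1), 2 * d i = 2 * (g + (k-1) - 1) := by
              rw [← Finset.mul_sum, hd2]
            have h2c : ∑ i : Fin (k-1), (c i + 1) = (N+1+1-1) + (k-1) := by
              rw [Finset.sum_add_distrib, hc2, Finset.sum_const, Finset.card_univ]
              simp
            rw [h2d, h2c] at hsum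
            omega
          obtain ⟨i, hi⟩ := hex
          rw [mul_eq_zero]; right
          refine Finset.prod_eq_zero (Finset.mem_univ i) ?_
          have hci : c i ≤ N+1 := by
            have h1 := Finset.single_le_sum (f := c) (fun j _ => Nat.zero_le _) (Finset.mem_univ i)
            omega
          have hd1i := hd1 i
          exact ih (c i) (by omega) (d i - 1) (by omega)
        rw [hA, hB]
        norm_num
  have hdiag : ∀ m : ℕ, e (2*m+1) m = Fq m := by
    intro m
    induction m using Nat.strong_induction_on with
    | _ m ih =>
      rcases m with _ | M
      · simpa [Fq] using h10
      · rw [hrec (2*(M+1)+1) (M+1) (by omega)]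
        have hS1 : (∑ p ∈ Finset.Ico 1 (2*(M+1)+1), ((2*(M+1)+1).choose p : ℚ) *
            ∑ ℓ ∈ Finset.range ((M+1) + 1), e p ℓ * e (2*(M+1)+1 - p) ((M+1) - ℓ)) = 0 := by
          apply Finset.sum_eq_zero
          intro p hp
          simp only [mem_Ico] at hp
          rw [mul_eq_zero]; right
          apply Finset.sum_eq_zero
          intro ℓ hℓ
          simp only [mem_range] at hℓ
          rcases le_or_gt p (2*ℓ) with h | h
          · rw [hvanish p ℓ h, zero_mul]
          · rw [hvanish (2*(M+1)+1-p) ((M+1)-ℓ) (by omega), mul_zero]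
        have hS2 : (∑ k ∈ Finset.Icc 3 (2*(M+1)+1), ((k : ℚ) - 2) *
            ∑ c ∈ compositions (2*(M+1)+1-1) (k-1),
              ∑ d ∈ compositions ((M+1) + (k-1) - 1) (k-1),
                ((2*(M+1)+1 : ℕ) : ℚ) * (Nat.multinomial Finset.univ c : ℚ) *
                  ∏ i : Fin (k-1), e (c i) (d i - 1)) = 2 * Fq (M+1) := by
          have hmem3 : (3:ℕ) ∈ Finset.Icc 3 (2*(M+1)+1) := by
            simp only [mem_Icc]; omega
          have hzero : ∀ k ∈ Finset.Icc 3 (2*(M+1)+1), k ≠ 3 → (((k:ℕ) : ℚ) - 2) *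
              (∑ c ∈ compositions (2*(M+1)+1-1) (k-1),
                ∑ d ∈ compositions ((M+1) + (k-1) - 1) (k-1),
                  ((2*(M+1)+1 : ℕ) : ℚ) * (Nat.multinomial Finset.univ c : ℚ) *
                    ∏ i : Fin (k-1), e (c i) (d i - 1)) = 0 := by
            intro k hk hk3
            simp only [mem_Icc] at hk
            rw [mul_eq_zero]; right
            apply Finset.sum_eq_zero; intro c hc
            apply Finset.sum_eq_zero; intro d hd
            simp only [compositions, mem_filter, Fintype.mem_piFinset, mem_Icc] at hc hd
            obtain ⟨hc1, hc2⟩ := hc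
            obtain ⟨hd1, hd2⟩ := hd
            have hex : ∃ i, c i + 2 ≤ 2 * d i := by
              by_contra hno
              push_neg at hno
              have hsum : ∑ i : Fin (k-1), 2 * d i ≤ ∑ i : Fin (k-1), (c i + 1) :=
                Finset.sum_le_sum fun i _ => by have h1 := hno i; omega
              have h2d : ∑ i : Fin (k-1), 2 * d i = 2 * ((M+1) + (k-1) - 1) := by
                rw [← Finset.mul_sum, hd2]
              have h2c : ∑ i : Fin (k-1), (c i + 1) = (2*(M+1)+1-1) + (k-1) := by
                rw [Finset.sum_add_distrib, hc2, Finset.sum_const, Finset.card_univ]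
                simp
              rw [h2d, h2c] at hsum
              omega
            obtain ⟨i, hi⟩ := hex
            rw [mul_eq_zero]; right
            refine Finset.prod_eq_zero (Finset.mem_univ i) ?_
            have hd1i := hd1 i
            exact hvanish (c i) (d i - 1) (by omega)
          rw [Finset.sum_eq_single_of_mem 3 hmem3 hzero]
          have hcoef : (((3:ℕ):ℚ) - 2) = 1 := by norm_num
          rw [hcoef, one_mul]
          show (∑ c ∈ compositions (2*(M+1)) 2, ∑ d ∈ compositions (M+2) 2,
              ((2*(M+1)+1 : ℕ) : ℚ) * (Nat.multinomial Finset.univ c : ℚ) *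
                ∏ i : Fin 2, e (c i) (d i - 1)) = 2 * Fq (M+1)
          rw [Finset.sum_comm]
          have hd' : ∀ d ∈ compositions (M+2) 2,
              (∑ c ∈ compositions (2*(M+1)) 2,
                ((2*(M+1)+1 : ℕ) : ℚ) * (Nat.multinomial Finset.univ c : ℚ) *
                  ∏ i : Fin 2, e (c i) (d i - 1))
              = ((2*(M+1)+1 : ℕ):ℚ) * (((2*(M+1)).factorial : ℚ) /
                  (((2*(d 0 - 1)+1).factorial:ℚ) * ((2*((M+1)-1-(d 0 - 1))+1).factorial:ℚ))) *
                  (Fq (d 0 - 1) * Fq ((M+1)-1-(d 0 - 1))) := by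
            intro d hd
            simp only [compositions, mem_filter, Fintype.mem_piFinset, mem_Icc] at hd
            obtain ⟨hd1, hd2⟩ := hd
            rw [Fin.sum_univ_two] at hd2
            have hd0 := hd1 0
            have hd1' := hd1 1
            have hmemc : (fun i : Fin 2 => 2 * d i - 1) ∈ compositions (2*(M+1)) 2 := by
              simp only [compositions, mem_filter, Fintype.mem_piFinset, mem_Icc]
              constructor
              · intro i
                fin_cases i <;> simp only [Fin.mk_zero, Fin.mk_one] <;> omega
              · rw [Fin.sum_univ_two]; omega
            have hczero : ∀ c ∈ compositions (2*(M+1)) 2, c ≠ (fun i : Fin 2 => 2 * d i - 1) →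
                ((2*(M+1)+1 : ℕ) : ℚ) * (Nat.multinomial Finset.univ c : ℚ) *
                  ∏ i : Fin 2, e (c i) (d i - 1) = 0 := by
              intro c hc hne
              simp only [compositions, mem_filter, Fintype.mem_piFinset, mem_Icc] at hc
              obtain ⟨hc1, hc2⟩ := hc
              rw [Fin.sum_univ_two] at hc2
              have hc0 := hc1 0
              have hc1' := hc1 1
              have hor : c 0 ≠ 2 * d 0 - 1 ∨ c 1 ≠ 2 * d 1 - 1 := by
                by_contra hq
                push_neg at hq
                exact hne (funext fun i => by fin_cases i <;> simp [hq.1, hq.2])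
              have hcase : c 0 + 2 ≤ 2 * d 0 ∨ c 1 + 2 ≤ 2 * d 1 := by omega
              rw [mul_eq_zero]; right
              rw [Fin.prod_univ_two]
              rcases hcase with h | h
              · rw [hvanish (c 0) (d 0 - 1) (by omega), zero_mul]
              · rw [hvanish (c 1) (d 1 - 1) (by omega), mul_zero]
            rw [Finset.sum_eq_single_of_mem _ hmemc hczero]
            have e0 : 2 * d 0 - 1 = 2 * (d 0 - 1) + 1 := by omega
            have e1 : 2 * d 1 - 1 = 2 * ((M+1) - 1 - (d 0 - 1)) + 1 := by omega
            have e2 : d 1 - 1 = (M+1) - 1 - (d 0 - 1) := by omega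
            have hms := Nat.multinomial_spec (Finset.univ) (fun i : Fin 2 => 2 * d i - 1)
            rw [Fin.prod_univ_two, Fin.sum_univ_two] at hms
            rw [e0, e1] at hms
            have hsum2 : 2 * (d 0 - 1) + 1 + (2 * ((M+1) - 1 - (d 0 - 1)) + 1) = 2*(M+1) := by
              omega
            rw [hsum2] at hms
            -- hms : (2*(d0-1)+1)! * (2*(M-d0+... )+1)! * mult = (2*(M+1))!
            have hmq : (Nat.multinomial Finset.univ (fun i : Fin 2 => 2 * d i - 1) : ℚ)
                = ((2*(M+1)).factorial : ℚ) /
                  (((2*(d 0 - 1)+1).factorial:ℚ) * ((2*((M+1)-1-(d 0 - 1))+1).factorial:ℚ)) := by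
              have f1 : ((2*(d 0 - 1)+1).factorial:ℚ) ≠ 0 :=
                Nat.cast_ne_zero.mpr (Nat.factorial_ne_zero _)
              have f2 : ((2*((M+1)-1-(d 0 - 1))+1).factorial:ℚ) ≠ 0 :=
                Nat.cast_ne_zero.mpr (Nat.factorial_ne_zero _)
              rw [eq_div_iff (mul_ne_zero f1 f2)]
              have hq := congrArg (Nat.cast : ℕ → ℚ) hms
              push_cast at hq ⊢
              linear_combination hq
            rw [Fin.prod_univ_two]
            beta_reduce
            rw [e0, e1, e2, hmq]
            rw [ih (d 0 - 1) (by omega), ih ((M+1)-1-(d 0 - 1)) (by omega)]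
          rw [Finset.sum_congr rfl hd']
          have step2 : (∑ d ∈ compositions (M+2) 2,
              ((2*(M+1)+1 : ℕ):ℚ) * (((2*(M+1)).factorial : ℚ) /
                (((2*(d 0 - 1)+1).factorial:ℚ) * ((2*((M+1)-1-(d 0 - 1))+1).factorial:ℚ))) *
                (Fq (d 0 - 1) * Fq ((M+1)-1-(d 0 - 1))))
              = ∑ ℓ ∈ range (M+1),
              ((2*(M+1)+1 : ℕ):ℚ) * (((2*(M+1)).factorial : ℚ) /
                (((2*ℓ+1).factorial:ℚ) * ((2*((M+1)-1-ℓ)+1).factorial:ℚ))) *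
                (Fq ℓ * Fq ((M+1)-1-ℓ)) := by
            apply Finset.sum_nbij' (i := fun d : Fin 2 → ℕ => d 0 - 1)
              (j := fun ℓ => ![ℓ+1, (M+1)-ℓ])
            · intro d hd
              simp only [compositions, mem_filter, Fintype.mem_piFinset, mem_Icc] at hd
              obtain ⟨hd1, hd2⟩ := hd
              rw [Fin.sum_univ_two] at hd2
              have h0 := hd1 0; have h1 := hd1 1
              simp only [mem_range]; omega
            · intro ℓ hℓ
              simp only [mem_range] at hℓ
              simp only [compositions, mem_filter, Fintype.mem_piFinset, mem_Icc]
              constructor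
              · intro i
                fin_cases i <;>
                  simp only [Fin.mk_zero, Fin.mk_one, Matrix.cons_val_zero, Matrix.cons_val_one,
                    Matrix.head_cons] <;> omega
              · rw [Fin.sum_univ_two]
                simp only [Matrix.cons_val_zero, Matrix.cons_val_one, Matrix.head_cons]
                omega
            · intro d hd
              simp only [compositions, mem_filter, Fintype.mem_piFinset, mem_Icc] at hd
              obtain ⟨hd1, hd2⟩ := hd
              rw [Fin.sum_univ_two] at hd2
              have h0 := hd1 0; have h1 := hd1 1
              funext i
              fin_cases i <;>
                simp only [Fin.mk_zero, Fin.mk_one, Matrix.cons_val_zero, Matrix.cons_val_one,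
                  Matrix.head_cons] <;> omega
            · intro ℓ hℓ
              simp only [mem_range] at hℓ
              simp only [Matrix.cons_val_zero]
              omega
            · intro d hd
              rfl
          rw [step2]
          exact conv M
        rw [hS1, hS2]
        ring
  intro m hm
  rw [hdiag m, Fq_eq m]
end

section
/- Let f : ℝ → ℝ be given by f(t) = t·(1 − √(1−2t))^2 / (2·(1−2t)^{3/2}) for t < 1/2. Then the sequence n ↦ f^{(n)}(0) of iterated derivatives of f at 0 is asymptotically equivalent, as n → ∞, to the sequence n ↦ (1/(2√π))·n^{1/2}·2^n·n!. (The quantity f^{(n)}(0) equals the number e¹_{n,1} of leaf-labeled simplex time-consistent galled trees with n leaves and exactly one gall.) -/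
open Real Filter Asymptotics Finset


/-- The exponential generating function `𝔈₁¹(t) = t·𝔘(t)²/(2(1−𝔘(t))³)` with
`𝔘(t) = 1 − √(1−2t)`, i.e. `f(t) = t·(1 − √(1−2t))² / (2·(1−2t)^{3/2})`. -/
noncomputable def f13 : ℝ → ℝ := fun t =>
  t * (1 - Real.sqrt (1 - 2 * t)) ^ 2 / (2 * (1 - 2 * t) ^ ((3 : ℝ) / 2))

noncomputable def Pc (p : ℝ) (n : ℕ) : ℝ := ∏ k ∈ Finset.range n, ((k : ℝ) - p)

noncomputable def gfun : ℝ → ℝ := fun t =>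
  (1/4) * (1 - 2*t) ^ (-(3:ℝ)/2) - (1/4) * (1 - 2*t) ^ ((1:ℝ)/2)
    - (1/2) * (1 - 2*t) ^ (-1:ℝ) + 1/2

lemma hasDerivAt_term (q : ℝ) {t : ℝ} (ht : t < 1/2) :
    HasDerivAt (fun s : ℝ => (1 - 2*s) ^ q) (-2 * (q * (1 - 2*t) ^ (q-1))) t := by
  have h1 : HasDerivAt (fun s : ℝ => 1 - 2*s) (-2) t := by
    simpa using ((hasDerivAt_id t).const_mul (2:ℝ)).const_sub 1
  have h2 := h1.rpow_const (p := q) (Or.inl (by nlinarith))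
  convert h2 using 1; ring

noncomputable def Ffun (n : ℕ) (t : ℝ) : ℝ :=
  2^n * ((1/4) * Pc (-(3:ℝ)/2) n * (1 - 2*t) ^ (-(3:ℝ)/2 - n)
    - (1/4) * Pc ((1:ℝ)/2) n * (1 - 2*t) ^ ((1:ℝ)/2 - n)
    - (1/2) * Pc (-1:ℝ) n * (1 - 2*t) ^ ((-1:ℝ) - n))
  + (if n = 0 then (1/2 : ℝ) else 0)

lemma iteratedDeriv_gfun (n : ℕ) : ∀ t : ℝ, t < 1/2 → iteratedDeriv n gfun t = Ffun n t := by
  induction n with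
  | zero =>
    intro t ht
    simp only [iteratedDeriv_zero, Ffun, gfun, Pc, Finset.prod_range_zero, pow_zero,
      Nat.cast_zero, if_true]
    norm_num
  | succ n ih =>
    intro t ht
    rw [iteratedDeriv_succ]
    have hev : iteratedDeriv n gfun =ᶠ[nhds t] Ffun n := by
      filter_upwards [Iio_mem_nhds ht] with s hs using ih s hs
    rw [hev.deriv_eq]
    have hF : HasDerivAt (Ffun n)
        (2^n * ((1/4) * Pc (-(3:ℝ)/2) n * (-2 * ((-(3:ℝ)/2 - n) * (1 - 2*t) ^ (-(3:ℝ)/2 - n - 1)))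
          - (1/4) * Pc ((1:ℝ)/2) n * (-2 * (((1:ℝ)/2 - n) * (1 - 2*t) ^ ((1:ℝ)/2 - n - 1)))
          - (1/2) * Pc (-1:ℝ) n * (-2 * (((-1:ℝ) - n) * (1 - 2*t) ^ ((-1:ℝ) - n - 1))))) t := by
      unfold Ffun
      exact ((((hasDerivAt_term _ ht).const_mul _).sub
        ((hasDerivAt_term _ ht).const_mul _)).sub
        ((hasDerivAt_term _ ht).const_mul _)).const_mul (2^n) |>.add_const _
    rw [hF.deriv]
    simp only [Ffun, Pc, Finset.prod_range_succ, Nat.succ_ne_zero, if_false,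
      Nat.cast_succ]
    have e1 : (-(3:ℝ)/2 - n - 1) = -(3:ℝ)/2 - (n + 1) := by ring
    have e2 : ((1:ℝ)/2 - n - 1) = (1:ℝ)/2 - (n + 1) := by ring
    have e3 : ((-1:ℝ) - n - 1) = (-1:ℝ) - (n + 1) := by ring
    rw [e1, e2, e3]
    ring

lemma f13_eq_gfun {t : ℝ} (ht : t < 1/2) : f13 t = gfun t := by
  have hs : (0:ℝ) < 1 - 2*t := by linarith
  set u := Real.sqrt (1 - 2*t) with hu
  have hu0 : 0 < u := Real.sqrt_pos.mpr hs
  have hu2 : u ^ 2 = 1 - 2*t := Real.sq_sqrt hs.le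
  have h32 : (1 - 2*t) ^ ((3:ℝ)/2) = (1 - 2*t) * u := by
    rw [show ((3:ℝ)/2) = 1 + 1/2 by norm_num, Real.rpow_add hs, Real.rpow_one,
      ← Real.sqrt_eq_rpow]
  have hm32 : (1 - 2*t) ^ (-(3:ℝ)/2) = ((1 - 2*t) * u)⁻¹ := by
    rw [show (-(3:ℝ)/2) = -(3/2) by norm_num, Real.rpow_neg hs.le, h32]
  have h12 : (1 - 2*t) ^ ((1:ℝ)/2) = u := (Real.sqrt_eq_rpow _).symm
  have hm1 : (1 - 2*t) ^ (-1:ℝ) = (1 - 2*t)⁻¹ := by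
    rw [Real.rpow_neg_one]
  unfold f13 gfun
  rw [h32, hm32, h12, hm1, ← hu]
  have ht' : t = (1 - u^2)/2 := by rw [hu2]; ring
  rw [ht']
  have key : 1 - 2*((1 - u^2)/2) = u^2 := by ring
  rw [key]
  field_simp
  ring

lemma iteratedDeriv_f13_zero (n : ℕ) :
    iteratedDeriv n f13 0 = 2^n * ((1/4) * Pc (-(3:ℝ)/2) n - (1/4) * Pc ((1:ℝ)/2) n
      - (1/2) * Pc (-1:ℝ) n) + (if n = 0 then (1/2:ℝ) else 0) := by
  have hev : f13 =ᶠ[nhds (0:ℝ)] gfun := by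
    filter_upwards [Iio_mem_nhds (show (0:ℝ) < 1/2 by norm_num)] with s hs
      using f13_eq_gfun hs
  rw [hev.iteratedDeriv_eq, iteratedDeriv_gfun n 0 (by norm_num), Ffun]
  norm_num [Real.one_rpow]

lemma Pc_succ (p : ℝ) (n : ℕ) : Pc p (n+1) = Pc p n * ((n:ℝ) - p) :=
  Finset.prod_range_succ _ _

lemma Pc_neg_one (n : ℕ) : Pc (-1:ℝ) n = (Nat.factorial n : ℝ) := by
  induction n with
  | zero => simp [Pc]
  | succ n ih =>
    rw [Pc_succ, ih, Nat.factorial_succ]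
    push_cast; ring

lemma Pc_neg_three_half (n : ℕ) :
    Pc (-(3:ℝ)/2) n * (4^n * (Nat.factorial n : ℝ)) = (Nat.factorial (2*n+1) : ℝ) := by
  induction n with
  | zero => simp [Pc]
  | succ n ih =>
    have h : (Nat.factorial (2*(n+1)+1) : ℝ)
        = (2*(n:ℝ)+3) * ((2*(n:ℝ)+2) * (Nat.factorial (2*n+1) : ℝ)) := by
      rw [show 2*(n+1)+1 = ((2*n+1)+1)+1 by ring, Nat.factorial_succ, Nat.factorial_succ]
      push_cast; ring
    rw [Pc_succ, h, Nat.factorial_succ]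
    push_cast
    linear_combination (4*((n:ℝ)+1)*((n:ℝ)+3/2)) * ih

lemma Pc_half (n : ℕ) (hn : 1 ≤ n) :
    Pc ((1:ℝ)/2) n * ((2*n+1) * (2*n-1)) = -Pc (-(3:ℝ)/2) n := by
  obtain ⟨m, rfl⟩ := Nat.exists_eq_add_of_le hn
  clear hn
  induction m with
  | zero => norm_num [Pc, Finset.prod_range_succ]
  | succ m ih =>
    rw [show 1+(m+1) = (1+m)+1 by ring, Pc_succ, Pc_succ]
    push_cast at ih ⊢
    linear_combination ((m:ℝ) + 5/2) * ih

lemma L_eq (n : ℕ) (hn : 1 ≤ n) :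
    (Nat.factorial (2*n) : ℝ) * Real.sqrt n / (4^n * (Nat.factorial n : ℝ)^2)
      = Stirling.stirlingSeq (2*n) / (Stirling.stirlingSeq n)^2 := by
  have hn0 : (0:ℝ) < n := by exact_mod_cast hn
  have hsq : (0:ℝ) < Real.sqrt n := Real.sqrt_pos.mpr hn0
  have hr2 : (Real.sqrt n)^2 = (n:ℝ) := Real.sq_sqrt hn0.le
  have hf1 : (0:ℝ) < (Nat.factorial n : ℝ) := by exact_mod_cast Nat.factorial_pos n
  unfold Stirling.stirlingSeq
  set A : ℝ := ((n:ℝ)/Real.exp 1)^n with hA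
  have hA0 : (0:ℝ) < A := by rw [hA]; positivity
  have e1 : Real.sqrt (2*((2*n:ℕ):ℝ)) = 2 * Real.sqrt n := by
    push_cast
    rw [show (2:ℝ)*(2*(n:ℝ)) = 4 * n by ring, Real.sqrt_mul (by norm_num) (n:ℝ),
      show (4:ℝ) = 2^2 by norm_num, Real.sqrt_sq (by norm_num)]
  have e2 : (((2*n:ℕ):ℝ)/Real.exp 1)^(2*n) = 4^n * A^2 := by
    rw [hA]
    push_cast
    rw [show (2*(n:ℝ))/Real.exp 1 = 2 * ((n:ℝ)/Real.exp 1) by ring, mul_pow,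
      show 2*n = n*2 by ring, pow_mul, pow_mul,
      show ((2:ℝ)^n)^2 = 4^n by rw [← pow_mul, show n*2 = 2*n by ring, pow_mul]; norm_num]
  rw [e1, e2]
  set B := Real.sqrt (2*((n:ℕ):ℝ)) with hB
  have hB0 : 0 < B := Real.sqrt_pos.mpr (by positivity)
  have e3 : B^2 = 2*(n:ℝ) := Real.sq_sqrt (by positivity)
  have e4 : ((Nat.factorial n : ℝ) / (B * A))^2
      = (Nat.factorial n : ℝ)^2 / (2*(n:ℝ) * A^2) := by
    rw [div_pow, mul_pow, e3]
  rw [e4]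
  rw [div_div_div_eq]
  field_simp
  linear_combination hr2

lemma L_tendsto : Tendsto
    (fun n : ℕ => (Nat.factorial (2*n) : ℝ) * Real.sqrt n / (4^n * (Nat.factorial n : ℝ)^2))
    atTop (nhds ((Real.sqrt π)⁻¹)) := by
  have h2 : Tendsto (fun n : ℕ => 2*n) atTop atTop :=
    tendsto_atTop_mono (fun n => by simp; omega) tendsto_id
  have h1 : Tendsto (fun n : ℕ => Stirling.stirlingSeq (2*n)) atTop (nhds (Real.sqrt π)) :=
    Stirling.tendsto_stirlingSeq_sqrt_pi.comp h2
  have hpi : Real.sqrt π ≠ 0 := ne_of_gt (Real.sqrt_pos.mpr Real.pi_pos)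
  have h3 : Tendsto (fun n : ℕ => Stirling.stirlingSeq (2*n) / (Stirling.stirlingSeq n)^2)
      atTop (nhds (Real.sqrt π / (Real.sqrt π)^2)) :=
    h1.div (Stirling.tendsto_stirlingSeq_sqrt_pi.pow 2) (by positivity)
  have : Real.sqrt π / (Real.sqrt π)^2 = (Real.sqrt π)⁻¹ := by
    field_simp
  rw [this] at h3
  refine h3.congr' ?_
  filter_upwards [eventually_ge_atTop 1] with n hn
  exact (L_eq n hn).symm

lemma K_tendsto : Tendsto
    (fun n : ℕ => Pc (-(3:ℝ)/2) n / (Real.sqrt n * (Nat.factorial n : ℝ)))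
    atTop (nhds (2 * (Real.sqrt π)⁻¹)) := by
  have h2 : Tendsto (fun n : ℕ => 2 + 1/(n:ℝ)) atTop (nhds 2) := by
    simpa using (tendsto_const_nhds (x := (2:ℝ))).add
      (tendsto_one_div_atTop_nhds_zero_nat : Tendsto (fun n : ℕ => 1/(n:ℝ)) atTop (nhds 0))
  have h := h2.mul L_tendsto
  refine (h.congr' ?_)
  filter_upwards [eventually_ge_atTop 1] with n hn
  have hn0 : (0:ℝ) < n := by exact_mod_cast hn
  have hsq : (0:ℝ) < Real.sqrt n := Real.sqrt_pos.mpr hn0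
  have hr2 : Real.sqrt n * Real.sqrt n = (n:ℝ) := Real.mul_self_sqrt hn0.le
  have hf : (0:ℝ) < (Nat.factorial n : ℝ) := by exact_mod_cast Nat.factorial_pos n
  have hP : Pc (-(3:ℝ)/2) n * (4^n * (Nat.factorial n : ℝ)) = (Nat.factorial (2*n+1) : ℝ) :=
    Pc_neg_three_half n
  have hfs : (Nat.factorial (2*n+1) : ℝ) = (2*(n:ℝ)+1) * (Nat.factorial (2*n) : ℝ) := by
    rw [Nat.factorial_succ]; push_cast; ring
  have h4 : (0:ℝ) < (4:ℝ)^n := by positivity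
  field_simp
  simp only [neg_div] at hP ⊢
  linear_combination ((2*(n:ℝ)+1) * (Nat.factorial (2*n):ℝ)) * hr2
    - (n:ℝ) * hP - (n:ℝ) * hfs

/-- The sequence `n ↦ f13⁽ⁿ⁾(0)` (the number of leaf-labeled simplex time-consistent galled
trees with `n` leaves and one gall) is asymptotically equivalent to
`n ↦ (1/(2√π))·n^{1/2}·2ⁿ·n!` as `n → ∞`. -/
theorem stmt13 :
    Asymptotics.IsEquivalent Filter.atTop
      (fun n : ℕ => iteratedDeriv n f13 0)
      (fun n : ℕ => (1 / (2 * Real.sqrt Real.pi)) * (n : ℝ) ^ ((1 : ℝ) / 2)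
        * 2 ^ n * (Nat.factorial n : ℝ)) := by
  have hpi : (0:ℝ) < Real.sqrt π := Real.sqrt_pos.mpr Real.pi_pos
  have hz : ∀ᶠ n : ℕ in atTop,
      (1 / (2 * Real.sqrt π) * (n : ℝ) ^ ((1:ℝ)/2) * 2 ^ n * (Nat.factorial n : ℝ)) ≠ 0 := by
    filter_upwards [eventually_ge_atTop 1] with n hn
    have hn0 : (0:ℝ) < n := by exact_mod_cast hn
    have h1 : (0:ℝ) < (n:ℝ) ^ ((1:ℝ)/2) := Real.rpow_pos_of_pos hn0 _
    have h2 : (0:ℝ) < (Nat.factorial n : ℝ) := by exact_mod_cast Nat.factorial_pos n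
    positivity
  rw [Asymptotics.isEquivalent_iff_tendsto_one hz]
  -- the explicit limit
  have hEps : Tendsto (fun n : ℕ => 1/((2*(n:ℝ)+1)*(2*(n:ℝ)-1))) atTop (nhds 0) := by
    have hAT : Tendsto (fun n : ℕ => (2*(n:ℝ)+1)*(2*(n:ℝ)-1)) atTop atTop := by
      apply tendsto_atTop_mono' atTop ?_ tendsto_natCast_atTop_atTop
      filter_upwards [eventually_ge_atTop 1] with n hn
      have : (1:ℝ) ≤ n := by exact_mod_cast hn
      nlinarith
    exact hAT.inv_tendsto_atTop.congr fun n => by simp [one_div]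
  have hSq : Tendsto (fun n : ℕ => Real.sqrt π / Real.sqrt n) atTop (nhds 0) := by
    apply Tendsto.div_atTop tendsto_const_nhds
    have := (tendsto_rpow_atTop (by norm_num : (0:ℝ) < 1/2)).comp
      tendsto_natCast_atTop_atTop
    refine this.congr fun n => ?_
    simp [Real.sqrt_eq_rpow]
  have hE : Tendsto (fun n : ℕ =>
      (Real.sqrt π / 2) * (Pc (-(3:ℝ)/2) n / (Real.sqrt n * (Nat.factorial n : ℝ)))
        * (1 + 1/((2*(n:ℝ)+1)*(2*(n:ℝ)-1))) - Real.sqrt π / Real.sqrt n)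
      atTop (nhds ((Real.sqrt π / 2) * (2 * (Real.sqrt π)⁻¹) * (1 + 0) - 0)) :=
    ((tendsto_const_nhds.mul K_tendsto).mul (tendsto_const_nhds.add hEps)).sub hSq
  have hval : (Real.sqrt π / 2) * (2 * (Real.sqrt π)⁻¹) * (1 + 0) - 0 = 1 := by
    field_simp
    norm_num
  rw [hval] at hE
  refine hE.congr' ?_
  filter_upwards [eventually_ge_atTop 1] with n hn
  have hn0 : (0:ℝ) < n := by exact_mod_cast hn
  have hsq : (0:ℝ) < Real.sqrt n := Real.sqrt_pos.mpr hn0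
  have hr2 : Real.sqrt n * Real.sqrt n = (n:ℝ) := Real.mul_self_sqrt hn0.le
  have hf : (0:ℝ) < (Nat.factorial n : ℝ) := by exact_mod_cast Nat.factorial_pos n
  have h2n : (0:ℝ) < (2:ℝ)^n := by positivity
  have hodd1 : ((2:ℝ)*n+1) ≠ 0 := by positivity
  have hodd2 : ((2:ℝ)*n-1) ≠ 0 := by
    have : (1:ℝ) ≤ n := by exact_mod_cast hn
    nlinarith
  have hP2 : Pc ((1:ℝ)/2) n = -Pc (-(3:ℝ)/2) n / ((2*(n:ℝ)+1)*(2*(n:ℝ)-1)) := by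
    have := Pc_half n hn
    field_simp
    linarith [this]
  simp only [Pi.div_apply]
  rw [iteratedDeriv_f13_zero, if_neg (by omega : ¬ n = 0), Pc_neg_one, hP2,
    show ((n:ℝ) ^ ((1:ℝ)/2)) = Real.sqrt n from (Real.sqrt_eq_rpow _).symm]
  field_simp
  ring
end

section
/- For every integer n ≥ 1, the n-th iterated derivative at 0 of the function f(t) = 1 − √(1−2t) satisfies f^{(n)}(0) = (2n−2)!/(2^{n−1}·(n−1)!). (Equivalently, the n-th Taylor coefficient of f at 0 is (2n−3)!!/n!, the exponential generating function coefficient counting leaf-labeled rooted binary trees with n leaves.) -/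
noncomputable def A18 (n : ℕ) : ℝ :=
  (Nat.factorial (2 * n - 2) : ℝ) / (2 ^ (n - 1) * (Nat.factorial (n - 1) : ℝ))

lemma A18_rec (n : ℕ) (hn : 1 ≤ n) : A18 (n + 1) = (2 * (n : ℝ) - 1) * A18 n := by
  obtain ⟨m, rfl⟩ := Nat.exists_eq_add_of_le hn
  unfold A18
  have h1 : 2 * (1 + m + 1) - 2 = 2 * m + 2 := by omega
  have h2 : (1 + m + 1) - 1 = m + 1 := by omega
  have h3 : 2 * (1 + m) - 2 = 2 * m := by omega
  have h4 : (1 + m) - 1 = m := by omega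
  rw [h1, h2, h3, h4]
  have e1 : Nat.factorial (2 * m + 2) = (2 * m + 2) * ((2 * m + 1) * Nat.factorial (2 * m)) := by
    rw [Nat.factorial_succ, Nat.factorial_succ]
  have e2 : Nat.factorial (m + 1) = (m + 1) * Nat.factorial m := Nat.factorial_succ m
  rw [e1, e2]
  have hf : (Nat.factorial m : ℝ) ≠ 0 := Nat.cast_ne_zero.mpr (Nat.factorial_ne_zero m)
  have hp : (2 : ℝ) ^ m ≠ 0 := by positivity
  push_cast
  field_simp
  ring

/-- On the set `1 - 2t > 0`, derivative of `(1-2t)^p`. -/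
lemma hasDerivAt_pow18 (p : ℝ) (t : ℝ) (ht : 0 < 1 - 2 * t) :
    HasDerivAt (fun x : ℝ => (1 - 2 * x) ^ p) (-2 * p * (1 - 2 * t) ^ (p - 1)) t := by
  have hin : HasDerivAt (fun x : ℝ => 1 - 2 * x) (-2) t := by
    simpa using ((hasDerivAt_id t).const_mul (2 : ℝ)).const_sub 1
  have := (Real.hasDerivAt_rpow_const (x := 1 - 2 * t) (p := p)
    (Or.inl (ne_of_gt ht))).comp t hin
  exact this.congr_deriv (by ring)

/-- For every `n ≥ 1`, the `n`-th iterated derivative at `0` of `f(t) = 1 − √(1−2t)` equals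
`(2n−2)!/(2^{n−1}·(n−1)!)` (i.e. `(2n−3)!!·n!/n! · …`; the `n`-th Taylor coefficient is
`(2n−3)!!/n!`, counting leaf-labeled rooted binary trees with `n` leaves). -/
theorem stmt18 :
    ∀ n : ℕ, 1 ≤ n →
      iteratedDeriv n (fun t : ℝ => 1 - Real.sqrt (1 - 2 * t)) 0
        = (Nat.factorial (2 * n - 2) : ℝ)
            / (2 ^ (n - 1) * (Nat.factorial (n - 1) : ℝ)) := by
  set f : ℝ → ℝ := fun t => 1 - Real.sqrt (1 - 2 * t) with hf
  have hU : IsOpen {t : ℝ | 0 < 1 - 2 * t} := by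
    have : Continuous fun t : ℝ => 1 - 2 * t := by continuity
    exact isOpen_lt continuous_const this
  have key : ∀ n : ℕ, 1 ≤ n → ∀ t : ℝ, 0 < 1 - 2 * t →
      iteratedDeriv n f t = A18 n * (1 - 2 * t) ^ ((1 : ℝ) / 2 - n) := by
    intro n hn
    induction n, hn using Nat.le_induction with
    | base =>
      intro t ht
      have hd : HasDerivAt f ((1 - 2 * t) ^ (-(1 / 2) : ℝ)) t := by
        have hin : HasDerivAt (fun x : ℝ => 1 - 2 * x) (-2) t := by
          simpa using ((hasDerivAt_id t).const_mul (2 : ℝ)).const_sub 1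
        have hs := (Real.hasDerivAt_sqrt (ne_of_gt ht)).comp t hin
        have : HasDerivAt f (-(1 / (2 * Real.sqrt (1 - 2 * t)) * (-2))) t := by
          simpa [hf] using hs.const_sub 1
        convert this using 1
        rw [Real.rpow_neg ht.le, Real.sqrt_eq_rpow]
        field_simp
      rw [iteratedDeriv_one, hd.deriv]
      have : A18 1 = 1 := by norm_num [A18]
      rw [this, one_mul]
      norm_num
    | succ n hn ih =>
      intro t ht
      rw [iteratedDeriv_succ]
      have hEq : iteratedDeriv n f =ᶠ[nhds t]
          fun x => A18 n * (1 - 2 * x) ^ ((1 : ℝ) / 2 - n) := by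
        filter_upwards [hU.mem_nhds ht] with x hx
        exact ih x hx
      rw [hEq.deriv_eq]
      have hd : HasDerivAt (fun x : ℝ => A18 n * (1 - 2 * x) ^ ((1 : ℝ) / 2 - n))
          (A18 n * (-2 * ((1 : ℝ) / 2 - n) * (1 - 2 * t) ^ ((1 : ℝ) / 2 - n - 1))) t :=
        (hasDerivAt_pow18 _ t ht).const_mul _
      rw [hd.deriv, A18_rec n hn]
      have : ((1 : ℝ) / 2 - n - 1) = (1 : ℝ) / 2 - (n + 1 : ℕ) := by push_cast; ring
      rw [← this]
      ring
  intro n hn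
  rw [key n hn 0 (by norm_num)]
  norm_num [A18, Real.one_rpow]
end

section
/- The sequence u_n = (2n−2)!/(2^{n−1}·(n−1)!) (the number of leaf-labeled rooted binary trees with n leaves, equal to (2n−3)!!) is asymptotically equivalent, as n → ∞, to the sequence n ↦ (1/(2√π))·n^{−3/2}·2^n·n!. -/
open Filter Real Asymptotics Stirling

lemma stmt19_key (m : ℕ) :
    ((Nat.factorial (2 * (m + 2) - 2) : ℝ)
        / (2 ^ ((m + 2) - 1) * (Nat.factorial ((m + 2) - 1) : ℝ)))
      / ((1 / (2 * Real.sqrt Real.pi)) * ((m + 2 : ℕ) : ℝ) ^ (-(3 : ℝ) / 2)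
        * 2 ^ (m + 2) * (Nat.factorial (m + 2) : ℝ))
    = Real.sqrt Real.pi
        * (Real.sqrt (((m + 2 : ℕ) : ℝ)) / Real.sqrt ((((m + 2) - 1 : ℕ) : ℝ)))
        * (stirlingSeq (2 * ((m + 2) - 1)) / (stirlingSeq ((m + 2) - 1)) ^ 2) := by
  have hx : (0:ℝ) < ((m:ℝ) + 2) := by positivity
  have hrpow : ((m:ℝ) + 2) ^ (-(3 : ℝ) / 2) = (Real.sqrt ((m:ℝ)+2) ^ 3)⁻¹ := by
    rw [Real.sqrt_eq_rpow, ← Real.rpow_natCast (((m:ℝ)+2) ^ ((1:ℝ)/2)) 3,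
      ← Real.rpow_mul hx.le, ← Real.rpow_neg hx.le]
    norm_num
  have h1 : ((m + 2 : ℕ) - 1) = m + 1 := by omega
  have h2 : (2 * (m + 2) - 2) = 2 * (m + 1) := by omega
  rw [h1, h2]
  simp only [stirlingSeq]
  have hsq2 : Real.sqrt (2 * ((2 * (m + 1) : ℕ) : ℝ)) = 2 * Real.sqrt ((m:ℝ) + 1) := by
    push_cast
    rw [show (2 * (2 * ((m:ℝ) + 1))) = 2 ^ 2 * ((m:ℝ)+1) by ring,
      Real.sqrt_mul (by positivity), Real.sqrt_sq (by norm_num)]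
  have hsq1 : Real.sqrt (2 * (((m + 1) : ℕ) : ℝ)) = Real.sqrt 2 * Real.sqrt ((m:ℝ) + 1) := by
    push_cast
    rw [Real.sqrt_mul (by norm_num)]
  have hpow : (((2 * (m + 1) : ℕ) : ℝ) / Real.exp 1) ^ (2 * (m + 1))
      = 2 ^ (2 * (m+1)) * ((((m:ℝ) + 1) / Real.exp 1) ^ (m + 1)) ^ 2 := by
    push_cast
    rw [show (2 * ((m:ℝ) + 1)) / Real.exp 1 = 2 * (((m:ℝ)+1) / Real.exp 1) by ring,
      mul_pow, ← pow_mul, mul_comm (m+1) 2]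
  have hfac : ((Nat.factorial (m + 2) : ℝ)) = ((m:ℝ) + 2) * (Nat.factorial (m+1) : ℝ) := by
    rw [show m + 2 = (m+1) + 1 by ring, Nat.factorial_succ]
    push_cast; ring
  have hx3 : Real.sqrt ((m:ℝ)+2) ^ 3 = ((m:ℝ)+2) * Real.sqrt ((m:ℝ)+2) := by
    rw [pow_succ, Real.sq_sqrt (by positivity)]
  push_cast at *
  rw [hrpow, hsq2, hsq1, hpow, hfac, hx3]
  have e1 : Real.exp 1 ≠ 0 := Real.exp_ne_zero 1
  have pπ : Real.sqrt Real.pi ≠ 0 := by positivity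
  have sm : Real.sqrt ((m:ℝ)+1) ≠ 0 := by positivity
  have sx : Real.sqrt ((m:ℝ)+2) ≠ 0 := by positivity
  have s2 : Real.sqrt 2 ≠ 0 := by positivity
  have f1 : ((Nat.factorial (m+1) : ℝ)) ≠ 0 := by positivity
  have f2 : ((Nat.factorial (2*(m+1)) : ℝ)) ≠ 0 := by positivity
  have d1 : (((m:ℝ)+1) / Real.exp 1) ^ (m+1) ≠ 0 := by positivity
  field_simp
  ring_nf
  rw [Real.sq_sqrt (show (0:ℝ) ≤ 2 by norm_num)]
  ring

/-- The sequence `u_n = (2n−2)!/(2^{n−1}·(n−1)!)` (the number of leaf-labeled rooted binary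
trees with `n` leaves, equal to `(2n−3)!!`) is asymptotically equivalent to
`n ↦ (1/(2√π))·n^{−3/2}·2ⁿ·n!` as `n → ∞`. -/
theorem stmt19 :
    Asymptotics.IsEquivalent Filter.atTop
      (fun n : ℕ => (Nat.factorial (2 * n - 2) : ℝ)
        / (2 ^ (n - 1) * (Nat.factorial (n - 1) : ℝ)))
      (fun n : ℕ => (1 / (2 * Real.sqrt Real.pi)) * (n : ℝ) ^ (-(3 : ℝ) / 2)
        * 2 ^ n * (Nat.factorial n : ℝ)) := by
  apply Asymptotics.isEquivalent_of_tendsto_one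
  · -- limits of the pieces
    have hm : Tendsto (fun n : ℕ => ((n - 1 : ℕ) : ℝ)) atTop atTop := by
      apply tendsto_natCast_atTop_atTop.comp
      exact tendsto_atTop_atTop.mpr fun b => ⟨b + 1, fun a ha => by omega⟩
    have hq : Tendsto (fun n : ℕ => ((n : ℝ) / ((n - 1 : ℕ) : ℝ))) atTop (nhds 1) := by
      have h0 : Tendsto (fun n : ℕ => 1 + 1 / ((n - 1 : ℕ) : ℝ)) atTop (nhds 1) := by
        have := (tendsto_inv_atTop_zero.comp hm).const_add (1:ℝ)
        simpa [one_div] using this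
      apply h0.congr'
      filter_upwards [eventually_ge_atTop 2] with n hn
      have h1 : ((n - 1 : ℕ) : ℝ) = (n : ℝ) - 1 := by
        have : (1:ℕ) ≤ n := by omega
        push_cast [this]; ring
      have h2 : ((n - 1 : ℕ) : ℝ) ≠ 0 := by
        rw [h1]
        have : (2:ℝ) ≤ (n:ℝ) := by exact_mod_cast hn
        nlinarith
      rw [h1] at h2 ⊢
      field_simp
      ring
    have hsqrtq : Tendsto (fun n : ℕ =>
        Real.sqrt ((n : ℝ)) / Real.sqrt (((n - 1 : ℕ) : ℝ))) atTop (nhds 1) := by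
      have := (Real.continuous_sqrt.continuousAt (x := (1:ℝ))).tendsto.comp hq
      rw [Real.sqrt_one] at this
      apply this.congr'
      filter_upwards [eventually_ge_atTop 1] with n hn
      simp [Function.comp, Real.sqrt_div (by positivity : (0:ℝ) ≤ (n:ℝ))]
    have hs1 : Tendsto (fun n : ℕ => stirlingSeq (2 * (n - 1))) atTop (nhds (Real.sqrt π)) := by
      apply tendsto_stirlingSeq_sqrt_pi.comp
      exact tendsto_atTop_atTop.mpr fun b => ⟨b + 1, fun a ha => by omega⟩
    have hs2 : Tendsto (fun n : ℕ => stirlingSeq (n - 1)) atTop (nhds (Real.sqrt π)) := by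
      apply tendsto_stirlingSeq_sqrt_pi.comp
      exact tendsto_atTop_atTop.mpr fun b => ⟨b + 1, fun a ha => by omega⟩
    have pπ : Real.sqrt π ≠ 0 := by positivity
    have hall : Tendsto (fun n : ℕ =>
        Real.sqrt Real.pi * (Real.sqrt ((n : ℝ)) / Real.sqrt (((n - 1 : ℕ) : ℝ)))
          * (stirlingSeq (2 * (n - 1)) / (stirlingSeq (n - 1)) ^ 2)) atTop
        (nhds (Real.sqrt π * 1 * (Real.sqrt π / (Real.sqrt π) ^ 2))) :=
      ((tendsto_const_nhds.mul hsqrtq).mul (hs1.div (hs2.pow 2) (pow_ne_zero 2 pπ)))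
    have : Real.sqrt π * 1 * (Real.sqrt π / (Real.sqrt π) ^ 2) = 1 := by
      field_simp
    rw [this] at hall
    apply hall.congr'
    filter_upwards [eventually_ge_atTop 2] with n hn
    obtain ⟨m, rfl⟩ : ∃ m, n = m + 2 := ⟨n - 2, by omega⟩
    simp only [Pi.div_apply]
    exact (stmt19_key m).symm
end
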